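/- arXiv:2109.09174 — 3 statements merged into one kernel-verified Lean document; each statement's English description precedes it below -/
import Mathlib

section
/- For a countably infinite set Ω, every involution of Ω (element of order 2) lies in the subgroup generated by the set R of permutations with only finitely many orbits. In particular, a product of infinitely many disjoint transpositions can be written as a product of two permutations each consisting of a single infinite cycle. -/
/-- The orbit (cycle) of `x` under the permutation `f`. -/
def orbitOf {Ω : Type*} (f : Equiv.Perm Ω) (x : Ω) : Set Ω :=
  Set.range fun k : ℤ => (f ^ k) x

/-- Locally finite permutations: all orbits are finite. -/
def LFset (Ω : Type*) : Set (Equiv.Perm Ω) := {f | ∀ x, (orbitOf f x).Finite}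

/-- Ringed permutations: only finitely many orbits. -/
def RingedSet (Ω : Type*) : Set (Equiv.Perm Ω) := {f | (Set.range (orbitOf f)).Finite}

/-- Wild permutations: infinitely many infinite orbits. -/
def WildSet (Ω : Type*) : Set (Equiv.Perm Ω) :=
  {f | {O : Set Ω | (∃ x, O = orbitOf f x) ∧ O.Infinite}.Infinite}

namespace IAux

open Equiv Function Set

variable {α β : Type*}

/-- conjugation of a permutation by an equiv -/
def cj (e : α ≃ β) (σ : Perm α) : Perm β := (e.symm.trans σ).trans e

lemma cj_apply (e : α ≃ β) (σ : Perm α) (x : β) : cj e σ x = e (σ (e.symm x)) := rfl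

lemma cj_mul (e : α ≃ β) (σ τ : Perm α) : cj e (σ * τ) = cj e σ * cj e τ := by
  ext x; simp [cj, Perm.mul_apply]

lemma cj_one (e : α ≃ β) : cj e 1 = 1 := by ext x; simp [cj]

/-- cj as a monoid hom -/
def cjHom (e : α ≃ β) : Perm α →* Perm β where
  toFun := cj e
  map_one' := cj_one e
  map_mul' := cj_mul e

lemma cj_zpow (e : α ≃ β) (σ : Perm α) (k : ℤ) : cj e (σ ^ k) = (cj e σ) ^ k :=
  map_zpow (cjHom e) σ k

lemma orbitOf_cj (e : α ≃ β) (σ : Perm α) (x : α) :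
    orbitOf (cj e σ) (e x) = e '' orbitOf σ x := by
  ext y
  constructor
  · rintro ⟨k, rfl⟩
    refine ⟨(σ ^ k) x, ⟨k, rfl⟩, ?_⟩
    show e ((σ ^ k) x) = (cj e σ ^ k) (e x)
    rw [← cj_zpow]; simp [cj_apply]
  · rintro ⟨z, ⟨k, rfl⟩, rfl⟩
    refine ⟨k, ?_⟩
    show (cj e σ ^ k) (e x) = e ((σ ^ k) x)
    rw [← cj_zpow]; simp [cj_apply]

/-- single (infinite) cycle: each orbit is everything -/
def SC (σ : Perm α) : Prop := ∀ x, orbitOf σ x = Set.univ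

lemma SC.cj {e : α ≃ β} {σ : Perm α} (h : SC σ) : SC (IAux.cj e σ) := by
  intro y
  have : y = e (e.symm y) := (e.apply_symm_apply y).symm
  rw [this, orbitOf_cj, h, Set.image_univ, e.range_eq_univ]

lemma SC.ringed {σ : Perm α} (h : SC σ) : σ ∈ RingedSet α := by
  have : Set.range (orbitOf σ) ⊆ {Set.univ} := by rintro O ⟨x, rfl⟩; simp [h x]
  exact Set.Finite.subset (Set.finite_singleton _) this

lemma mem_orbitOf_self {σ : Perm α} (x : α) : x ∈ orbitOf σ x := ⟨0, rfl⟩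

lemma zpow_mem_orbitOf {σ : Perm α} (x : α) (k : ℤ) : (σ ^ k) x ∈ orbitOf σ x := ⟨k, rfl⟩

lemma orbitOf_eq_of_mem {σ : Perm α} {x y : α} (h : y ∈ orbitOf σ x) :
    orbitOf σ y = orbitOf σ x := by
  obtain ⟨k, rfl⟩ := h
  ext z
  constructor
  · rintro ⟨m, rfl⟩
    refine ⟨m + k, ?_⟩
    show (σ ^ (m + k)) x = (σ ^ m) ((σ ^ k) x)
    rw [zpow_add, Perm.mul_apply]
  · rintro ⟨m, rfl⟩
    refine ⟨m - k, ?_⟩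
    show (σ ^ (m - k)) ((σ ^ k) x) = (σ ^ m) x
    rw [← Perm.mul_apply, ← zpow_add, sub_add_cancel]

lemma ringed_cj (e : α ≃ β) {σ : Perm α} (h : σ ∈ RingedSet α) : cj e σ ∈ RingedSet β := by
  have key : Set.range (orbitOf (cj e σ)) ⊆ (Set.image e) '' Set.range (orbitOf σ) := by
    rintro O ⟨y, rfl⟩
    refine ⟨orbitOf σ (e.symm y), ⟨e.symm y, rfl⟩, ?_⟩
    rw [← orbitOf_cj, e.apply_symm_apply]
  exact Set.Finite.subset (Set.Finite.image _ h) key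

end IAux
namespace IAux
open Equiv Function Set

def sh : Perm ℤ := Equiv.addRight (1 : ℤ)
lemma sh_apply (x : ℤ) : sh x = x + 1 := rfl

/-- the 4-periodic fixed-point-free involution on ℤ: pairs {4k,4k+2} and {4k+1,4k+3} -/
def sAfun (i : ℤ) : ℤ := if i % 4 ≤ 1 then i + 2 else i - 2

lemma sAfun_involutive : Function.Involutive sAfun := by
  intro i
  unfold sAfun
  split_ifs <;> omega

def σA : Perm ℤ := sAfun_involutive.toPerm

lemma σA_apply (i : ℤ) : σA i = if i % 4 ≤ 1 then i + 2 else i - 2 := rfl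

def τA : Perm ℤ := sh⁻¹ * σA

lemma τA_apply (i : ℤ) : τA i = if i % 4 ≤ 1 then i + 1 else i - 3 := by
  show sh⁻¹ (σA i) = _
  have h : ∀ z : ℤ, sh⁻¹ z = z - 1 := fun z => by
    show (Equiv.addRight (1:ℤ)).symm z = z - 1
    simp [Equiv.addRight, sub_eq_add_neg]
  rw [h, σA_apply]
  split_ifs <;> omega

lemma σA_eq : σA = sh * τA := by rw [τA, mul_inv_cancel_left]

lemma τA_pow4 : τA ^ (4:ℕ) = Equiv.addRight (-4 : ℤ) := by
  ext i
  show τA (τA (τA (τA i))) = i + (-4)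
  have h4 : i % 4 = 0 ∨ i % 4 = 1 ∨ i % 4 = 2 ∨ i % 4 = 3 := by omega
  rcases h4 with h | h | h | h <;>
    (rw [τA_apply, τA_apply, τA_apply, τA_apply]; split_ifs <;> omega)

end IAux

namespace IAux
open Equiv Function Set

lemma addRight_zpow (c : ℤ) (k : ℤ) : (Equiv.addRight c) ^ k = Equiv.addRight (k * c) := by
  induction k using Int.induction_on with
  | zero => ext x; simp
  | succ n ih => rw [zpow_add_one, ih]; ext x; simp [Equiv.coe_addRight]; ring
  | pred n ih =>
      rw [zpow_sub_one, ih]; ext x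
      simp only [Equiv.Perm.mul_apply, Equiv.Perm.inv_def, Equiv.coe_addRight]
      have h1 : (Equiv.addRight c).symm x = x - c := by
        simp [Equiv.addRight, sub_eq_add_neg]
      rw [h1]; ring

lemma τA_zpow4 (q : ℤ) : τA ^ (4 * q) = Equiv.addRight (q * (-4)) := by
  rw [zpow_mul, show ((4:ℤ) = ((4:ℕ):ℤ)) from rfl, zpow_natCast, τA_pow4, addRight_zpow]
  norm_num

lemma reach_of_mod {x z y : ℤ} (k : ℤ) (hk : (τA ^ k) x = z) (h : (z - y) % 4 = 0) :
    ∃ m : ℤ, (τA ^ m) x = y := by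
  refine ⟨4 * ((z - y) / 4) + k, ?_⟩
  rw [zpow_add, Equiv.Perm.mul_apply, hk, τA_zpow4, Equiv.coe_addRight]
  show z + (z - y) / 4 * (-4) = y
  omega

lemma τA_sc : ∀ x y : ℤ, ∃ m : ℤ, (τA ^ m) x = y := by
  intro x y
  have e0 : (τA ^ (0:ℤ)) x = x := by simp
  have e1 : (τA ^ (1:ℤ)) x = τA x := by simp
  have e2 : (τA ^ (2:ℤ)) x = τA (τA x) := by
    rw [show (2:ℤ) = 1 + 1 from rfl, zpow_add, zpow_one, Equiv.Perm.mul_apply]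
  have e3 : (τA ^ (3:ℤ)) x = τA (τA (τA x)) := by
    rw [show (3:ℤ) = 1 + (1 + 1) from rfl, zpow_add, zpow_add, zpow_one,
      Equiv.Perm.mul_apply, Equiv.Perm.mul_apply]
  have h4 : x % 4 = 0 ∨ x % 4 = 1 ∨ x % 4 = 2 ∨ x % 4 = 3 := by omega
  rcases h4 with h | h | h | h
  · have v1 : τA x = x + 1 := by rw [τA_apply]; split_ifs <;> omega
    have v2 : τA (x+1) = x + 2 := by rw [τA_apply]; split_ifs <;> omega
    have v3 : τA (x+2) = x - 1 := by rw [τA_apply]; split_ifs <;> omega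
    have hd : (x - y) % 4 = 0 ∨ (x+1 - y) % 4 = 0 ∨ (x+2 - y) % 4 = 0 ∨ (x-1 - y) % 4 = 0 := by
      omega
    rcases hd with h' | h' | h' | h'
    · exact reach_of_mod 0 e0 h'
    · exact reach_of_mod 1 (by rw [e1, v1]) h'
    · exact reach_of_mod 2 (by rw [e2, v1, v2]) h'
    · exact reach_of_mod 3 (by rw [e3, v1, v2, v3]) h'
  · have v1 : τA x = x + 1 := by rw [τA_apply]; split_ifs <;> omega
    have v2 : τA (x+1) = x - 2 := by rw [τA_apply]; split_ifs <;> omega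
    have v3 : τA (x-2) = x - 5 := by rw [τA_apply]; split_ifs <;> omega
    have hd : (x - y) % 4 = 0 ∨ (x+1 - y) % 4 = 0 ∨ (x-2 - y) % 4 = 0 ∨ (x-5 - y) % 4 = 0 := by
      omega
    rcases hd with h' | h' | h' | h'
    · exact reach_of_mod 0 e0 h'
    · exact reach_of_mod 1 (by rw [e1, v1]) h'
    · exact reach_of_mod 2 (by rw [e2, v1, v2]) h'
    · exact reach_of_mod 3 (by rw [e3, v1, v2, v3]) h'
  · have v1 : τA x = x - 3 := by rw [τA_apply]; split_ifs <;> omega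
    have v2 : τA (x-3) = x - 6 := by rw [τA_apply]; split_ifs <;> omega
    have v3 : τA (x-6) = x - 5 := by rw [τA_apply]; split_ifs <;> omega
    have hd : (x - y) % 4 = 0 ∨ (x-3 - y) % 4 = 0 ∨ (x-6 - y) % 4 = 0 ∨ (x-5 - y) % 4 = 0 := by
      omega
    rcases hd with h' | h' | h' | h'
    · exact reach_of_mod 0 e0 h'
    · exact reach_of_mod 1 (by rw [e1, v1]) h'
    · exact reach_of_mod 2 (by rw [e2, v1, v2]) h'
    · exact reach_of_mod 3 (by rw [e3, v1, v2, v3]) h'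
  · have v1 : τA x = x - 3 := by rw [τA_apply]; split_ifs <;> omega
    have v2 : τA (x-3) = x - 2 := by rw [τA_apply]; split_ifs <;> omega
    have v3 : τA (x-2) = x - 1 := by rw [τA_apply]; split_ifs <;> omega
    have hd : (x - y) % 4 = 0 ∨ (x-3 - y) % 4 = 0 ∨ (x-2 - y) % 4 = 0 ∨ (x-1 - y) % 4 = 0 := by
      omega
    rcases hd with h' | h' | h' | h'
    · exact reach_of_mod 0 e0 h'
    · exact reach_of_mod 1 (by rw [e1, v1]) h'
    · exact reach_of_mod 2 (by rw [e2, v1, v2]) h'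
    · exact reach_of_mod 3 (by rw [e3, v1, v2, v3]) h'

end IAux

namespace IAux
open Equiv Function Set

variable {α : Type*}

lemma orbitOf_congr_of_eq {τ τ₀ : Perm α} {x : α}
    (hk : ∀ k : ℤ, (τ ^ k) x = (τ₀ ^ k) x) : orbitOf τ₀ x = orbitOf τ x := by
  have : (fun k : ℤ => (τ₀ ^ k) x) = fun k : ℤ => (τ ^ k) x := funext fun k => (hk k).symm
  rw [orbitOf, orbitOf, this]

lemma perturb {τ τ₀ : Perm α} (hD : {x | τ x ≠ τ₀ x}.Finite)
    (h₀ : τ₀ ∈ RingedSet α) : τ ∈ RingedSet α := by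
  set D := {x | τ x ≠ τ₀ x} with hDdef
  have key : ∀ x, (∀ k : ℤ, (τ ^ k) x ∉ D) → ∀ k : ℤ, (τ ^ k) x = (τ₀ ^ k) x := by
    intro x hx k
    induction k using Int.induction_on with
    | zero => simp
    | succ n ih =>
        have h1 : (τ ^ ((n:ℤ) + 1)) x = τ ((τ ^ (n:ℤ)) x) := by
          rw [show ((n:ℤ) + 1) = 1 + n by ring, zpow_add, zpow_one, Equiv.Perm.mul_apply]
        have h2 : (τ₀ ^ ((n:ℤ) + 1)) x = τ₀ ((τ₀ ^ (n:ℤ)) x) := by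
          rw [show ((n:ℤ) + 1) = 1 + n by ring, zpow_add, zpow_one, Equiv.Perm.mul_apply]
        have hnD : (τ ^ (n:ℤ)) x ∉ D := hx n
        have heq : τ ((τ ^ (n:ℤ)) x) = τ₀ ((τ ^ (n:ℤ)) x) := by
          by_contra hne; exact hnD hne
        rw [h1, h2, heq, ih]
    | pred n ih =>
        set y := (τ ^ (-(n:ℤ) - 1)) x with hy
        have h1 : τ y = (τ ^ (-(n:ℤ))) x := by
          rw [hy, ← Equiv.Perm.mul_apply, ← zpow_one_add]
          norm_num
        have hyD : y ∉ D := hx _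
        have heq : τ₀ y = τ y := by
          by_contra hne; exact hyD fun h => hne h.symm
        have h2 : τ₀ y = (τ₀ ^ (-(n:ℤ))) x := by rw [heq, h1, ih]
        have h3 : τ₀ ((τ₀ ^ (-(n:ℤ) - 1)) x) = (τ₀ ^ (-(n:ℤ))) x := by
          rw [← Equiv.Perm.mul_apply, ← zpow_one_add]
          norm_num
        exact τ₀.injective (h2.trans h3.symm)
  have sub : Set.range (orbitOf τ) ⊆ (orbitOf τ '' D) ∪ Set.range (orbitOf τ₀) := by
    rintro O ⟨x, rfl⟩
    by_cases h : ∃ d ∈ D, d ∈ orbitOf τ x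
    · obtain ⟨d, hd, hmem⟩ := h
      exact Or.inl ⟨d, hd, orbitOf_eq_of_mem hmem⟩
    · push_neg at h
      exact Or.inr ⟨x, orbitOf_congr_of_eq (key x fun k hkD => h _ hkD ⟨k, rfl⟩)⟩
  exact Set.Finite.subset ((hD.image _).union h₀) sub

end IAux

namespace IAux
open Equiv Function Set

lemma sh_zpow_apply (k x : ℤ) : (sh ^ k) x = x + k := by
  rw [sh, addRight_zpow]
  show x + k * 1 = x + k
  ring

lemma SC_sh : SC sh := by
  intro x
  apply Set.eq_univ_of_forall
  intro y
  refine ⟨y - x, ?_⟩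
  show (sh ^ (y - x)) x = y
  rw [sh_zpow_apply]; ring

lemma SC_τA : SC τA := by
  intro x
  apply Set.eq_univ_of_forall
  intro y
  exact τA_sc x y

variable {Ω : Type*} [Countable Ω] [Infinite Ω]

/-- any fixed-point-free involution is conjugate to the model σA -/
lemma exists_conj_model (f : Perm Ω) (hf : ∀ x, f (f x) = x) (hfpf : ∀ x, f x ≠ x) :
    ∃ E : ℤ ≃ Ω, ∀ i, f (E i) = E (σA i) := by
  obtain ⟨enc, henc⟩ := exists_injective_nat Ω
  set T : Set Ω := {x | enc x < enc (f x)} with hTdef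
  have hT1 : ∀ x ∈ T, f x ∉ T := by
    intro x hx hfx
    simp only [hTdef, Set.mem_setOf_eq, hf] at hx hfx
    omega
  have hT2 : ∀ x, x ∉ T → f x ∈ T := by
    intro x hx
    simp only [hTdef, Set.mem_setOf_eq, hf] at hx ⊢
    have : enc (f x) ≠ enc x := fun h => hfpf x (henc h)
    omega
  have hTinf : T.Infinite := by
    intro hfin
    have huniv : (Set.univ : Set Ω) ⊆ T ∪ f '' T := by
      intro x _
      by_cases hx : x ∈ T
      · exact Or.inl hx
      · exact Or.inr ⟨f x, hT2 x hx, hf x⟩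
    exact Set.infinite_univ (Set.Finite.subset (hfin.union (hfin.image f)) huniv)
  haveI : Infinite ↥T := hTinf.to_subtype
  haveI : Encodable ↥T := Encodable.ofCountable _
  haveI : Denumerable ↥T := Denumerable.ofEncodableOfInfinite _
  set eT : ℤ ≃ ↥T := (Denumerable.eqv ℤ).trans (Denumerable.eqv ↥T).symm with heT
  set G : ℤ → Ω := fun i =>
    if i % 4 ≤ 1 then (eT (2*(i/4) + i%4 % 2) : Ω) else f (eT (2*(i/4) + i%4 % 2)) with hG
  have hGT : ∀ i, i % 4 ≤ 1 → G i = (eT (2*(i/4) + i%4 % 2) : Ω) := by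
    intro i hi; rw [hG]; simp only [if_pos hi]
  have hGF : ∀ i, ¬ (i % 4 ≤ 1) → G i = f (eT (2*(i/4) + i%4 % 2)) := by
    intro i hi; rw [hG]; simp only [if_neg hi]
  have hmemT : ∀ (z : ℤ), (eT z : Ω) ∈ T := fun z => (eT z).2
  have hGinj : Function.Injective G := by
    intro i j hij
    by_cases hi : i % 4 ≤ 1 <;> by_cases hj : j % 4 ≤ 1
    · rw [hGT i hi, hGT j hj] at hij
      have := eT.injective (Subtype.coe_injective hij)
      omega
    · rw [hGT i hi, hGF j hj] at hij
      exact absurd (hij ▸ hmemT (2*(i/4) + i%4 % 2)) (hT1 _ (hmemT _))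
    · rw [hGF i hi, hGT j hj] at hij
      exact absurd (hij.symm ▸ hmemT (2*(j/4) + j%4 % 2)) (hT1 _ (hmemT _))
    · rw [hGF i hi, hGF j hj] at hij
      have := eT.injective (Subtype.coe_injective (f.injective hij))
      omega
  have hGsurj : Function.Surjective G := by
    intro x
    by_cases hx : x ∈ T
    · set z : ℤ := eT.symm ⟨x, hx⟩ with hz
      refine ⟨4*(z/2) + z%2, ?_⟩
      have hc : (4*(z/2) + z%2) % 4 ≤ 1 := by omega
      rw [hGT _ hc]
      have hidx : 2*((4*(z/2) + z%2)/4) + (4*(z/2) + z%2)%4 % 2 = z := by omega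
      rw [hidx, hz, eT.apply_symm_apply]
    · have hfx : f x ∈ T := hT2 x hx
      set z : ℤ := eT.symm ⟨f x, hfx⟩ with hz
      refine ⟨4*(z/2) + z%2 + 2, ?_⟩
      have hc : ¬ ((4*(z/2) + z%2 + 2) % 4 ≤ 1) := by omega
      rw [hGF _ hc]
      have hidx : 2*((4*(z/2) + z%2 + 2)/4) + (4*(z/2) + z%2 + 2)%4 % 2 = z := by omega
      rw [hidx, hz, eT.apply_symm_apply]
      exact hf x
  refine ⟨Equiv.ofBijective G ⟨hGinj, hGsurj⟩, ?_⟩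
  intro i
  show f (G i) = G (σA i)
  rw [σA_apply]
  by_cases hi : i % 4 ≤ 1
  · rw [if_pos hi, hGT i hi]
    have hc : ¬ ((i+2) % 4 ≤ 1) := by omega
    rw [hGF _ hc]
    have hidx : 2*((i+2)/4) + (i+2)%4 % 2 = 2*(i/4) + i%4 % 2 := by omega
    rw [hidx]
  · rw [if_neg hi, hGF i hi]
    have hc : (i-2) % 4 ≤ 1 := by omega
    rw [hGT _ hc]
    have hidx : 2*((i-2)/4) + (i-2)%4 % 2 = 2*(i/4) + i%4 % 2 := by omega
    rw [hidx]
    exact hf _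

lemma fpf_eq_two_sc (f : Perm Ω) (hf : ∀ x, f (f x) = x) (hfpf : ∀ x, f x ≠ x) :
    ∃ g h : Perm Ω, SC g ∧ SC h ∧ f = g * h := by
  obtain ⟨E, hE⟩ := exists_conj_model f hf hfpf
  have hfc : f = cj E σA := by
    ext x
    rw [cj_apply]
    have := hE (E.symm x)
    rw [E.apply_symm_apply] at this
    exact this
  refine ⟨cj E sh, cj E τA, SC_sh.cj, SC_τA.cj, ?_⟩
  rw [hfc, σA_eq, cj_mul]

lemma fpf_mem_closure (f : Perm Ω) (hf : ∀ x, f (f x) = x) (hfpf : ∀ x, f x ≠ x) :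
    f ∈ Subgroup.closure (RingedSet Ω) := by
  obtain ⟨g, h, hg, hh, rfl⟩ := fpf_eq_two_sc f hf hfpf
  exact Subgroup.mul_mem _ (Subgroup.subset_closure hg.ringed)
    (Subgroup.subset_closure hh.ringed)

end IAux

namespace IAux
open Equiv Function Set

lemma ρ1_involutive : Function.Involutive (fun i : ℤ => -i - 1) := by
  intro i; ring

def ρ1 : Perm ℤ := ρ1_involutive.toPerm

lemma ρ1_apply (i : ℤ) : ρ1 i = -i - 1 := rfl

lemma ρ1_fpf : ∀ i : ℤ, ρ1 i ≠ i := by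
  intro i h
  rw [ρ1_apply] at h
  omega

lemma neg_eq_sh_mul_ρ1 : (Equiv.neg ℤ : Perm ℤ) = sh * ρ1 := by
  ext i
  show -i = sh (ρ1 i)
  rw [ρ1_apply, sh_apply]
  ring

lemma cj_fpf_involution_mem_closure {Ω : Type*} [Countable Ω] [Infinite Ω]
    (E : ℤ ≃ Ω) : cj E ρ1 ∈ Subgroup.closure (RingedSet Ω) := by
  have hρinv : ∀ y : ℤ, ρ1 (ρ1 y) = y := by
    intro y; rw [ρ1_apply, ρ1_apply]; ring
  apply fpf_mem_closure
  · intro x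
    rw [cj_apply, cj_apply, E.symm_apply_apply, hρinv, E.apply_symm_apply]
  · intro x h
    rw [cj_apply] at h
    have h2 := congrArg E.symm h
    rw [E.symm_apply_apply] at h2
    exact ρ1_fpf _ h2

variable {Ω : Type*} [Countable Ω] [Infinite Ω]

lemma one_fixed_mem_closure (f : Perm Ω) (hf : ∀ x, f (f x) = x) (a : Ω)
    (hfix : ∀ x, f x = x ↔ x = a) : f ∈ Subgroup.closure (RingedSet Ω) := by
  obtain ⟨enc, henc⟩ := exists_injective_nat Ω
  set T : Set Ω := {x | enc x < enc (f x)} with hTdef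
  have hT0 : a ∉ T := by
    simp only [hTdef, Set.mem_setOf_eq, (hfix a).mpr rfl]
    omega
  have hT1 : ∀ x ∈ T, f x ∉ T := by
    intro x hx hfx
    simp only [hTdef, Set.mem_setOf_eq, hf] at hx hfx
    omega
  have hT2 : ∀ x, x ∉ T → x ≠ a → f x ∈ T := by
    intro x hx hxa
    simp only [hTdef, Set.mem_setOf_eq, hf] at hx ⊢
    have hne : f x ≠ x := fun h => hxa ((hfix x).mp h)
    have : enc (f x) ≠ enc x := fun h => hne (henc h)
    omega
  have hTinf : T.Infinite := by
    intro hfin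
    have huniv : (Set.univ : Set Ω) ⊆ {a} ∪ (T ∪ f '' T) := by
      intro x _
      by_cases hxa : x = a
      · exact Or.inl hxa
      by_cases hx : x ∈ T
      · exact Or.inr (Or.inl hx)
      · exact Or.inr (Or.inr ⟨f x, hT2 x hx hxa, hf x⟩)
    exact Set.infinite_univ
      (Set.Finite.subset ((Set.finite_singleton a).union (hfin.union (hfin.image f))) huniv)
  haveI : Infinite ↥T := hTinf.to_subtype
  haveI : Encodable ↥T := Encodable.ofCountable _
  haveI : Denumerable ↥T := Denumerable.ofEncodableOfInfinite _
  set eN : ℕ ≃ ↥T := (Denumerable.eqv ↥T).symm with heN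
  set G : ℤ → Ω := fun i =>
    if i = 0 then a else if 0 < i then (eN (i-1).toNat : Ω) else f (eN (-i-1).toNat) with hG
  have hG0 : G 0 = a := by simp [hG]
  have hGpos : ∀ i, 0 < i → G i = (eN (i-1).toNat : Ω) := by
    intro i hi; rw [hG]
    simp only [if_neg (by omega : ¬ (i = 0)), if_pos hi]
  have hGneg : ∀ i, i < 0 → G i = f (eN (-i-1).toNat) := by
    intro i hi; rw [hG]
    simp only [if_neg (by omega : ¬ (i = 0)), if_neg (by omega : ¬ (0 < i))]
  have hmemT : ∀ (n : ℕ), (eN n : Ω) ∈ T := fun n => (eN n).2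
  have hGinj : Function.Injective G := by
    intro i j hij
    rcases lt_trichotomy i 0 with hi | hi | hi <;> rcases lt_trichotomy j 0 with hj | hj | hj
    · -- i<0, j<0
      rw [hGneg i hi, hGneg j hj] at hij
      have := eN.injective (Subtype.coe_injective (f.injective hij))
      omega
    · -- i<0, j=0
      subst hj; rw [hGneg i hi, hG0] at hij
      have h2 := congrArg f hij
      rw [hf, (hfix a).mpr rfl] at h2
      exact absurd (h2 ▸ hmemT _) hT0
    · -- i<0, j>0
      rw [hGneg i hi, hGpos j hj] at hij
      exact absurd (hij.symm ▸ hmemT ((j-1).toNat)) (hT1 _ (hmemT ((-i-1).toNat)))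
    · -- i=0, j<0
      subst hi; rw [hG0, hGneg j hj] at hij
      have h2 := congrArg f hij.symm
      rw [hf, (hfix a).mpr rfl] at h2
      exact absurd (h2 ▸ hmemT _) hT0
    · omega
    · -- i=0, j>0
      subst hi; rw [hG0, hGpos j hj] at hij
      exact absurd (hij.symm ▸ hmemT ((j-1).toNat)) hT0
    · -- i>0, j<0
      rw [hGpos i hi, hGneg j hj] at hij
      exact absurd (hij ▸ hmemT ((i-1).toNat)) (hT1 _ (hmemT ((-j-1).toNat)))
    · -- i>0, j=0
      subst hj; rw [hGpos i hi, hG0] at hij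
      exact absurd (hij ▸ hmemT ((i-1).toNat)) hT0
    · -- i>0, j>0
      rw [hGpos i hi, hGpos j hj] at hij
      have := eN.injective (Subtype.coe_injective hij)
      omega
  have hGsurj : Function.Surjective G := by
    intro x
    by_cases hxa : x = a
    · exact ⟨0, by rw [hG0, hxa]⟩
    by_cases hx : x ∈ T
    · refine ⟨(eN.symm ⟨x, hx⟩ : ℕ) + 1, ?_⟩
      rw [hGpos _ (by omega)]
      have : (((eN.symm ⟨x, hx⟩ : ℕ) : ℤ) + 1 - 1).toNat = (eN.symm ⟨x, hx⟩ : ℕ) := by omega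
      rw [this, eN.apply_symm_apply]
    · have hfx : f x ∈ T := hT2 x hx hxa
      refine ⟨-((eN.symm ⟨f x, hfx⟩ : ℕ) + 1), ?_⟩
      rw [hGneg _ (by omega)]
      have : (-(-(((eN.symm ⟨f x, hfx⟩ : ℕ) : ℤ) + 1))-1).toNat = (eN.symm ⟨f x, hfx⟩ : ℕ) := by
        omega
      rw [this, eN.apply_symm_apply]
      exact hf x
  set E : ℤ ≃ Ω := Equiv.ofBijective G ⟨hGinj, hGsurj⟩ with hE
  have hinter : ∀ i, f (E i) = E ((Equiv.neg ℤ) i) := by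
    intro i
    show f (G i) = G (-i)
    rcases lt_trichotomy i 0 with hi | hi | hi
    · rw [hGneg i hi, hGpos (-i) (by omega), hf]
    · subst hi; rw [hG0]
      rw [show -(0:ℤ) = 0 by ring, hG0]
      exact (hfix a).mpr rfl
    · rw [hGpos i hi, hGneg (-i) (by omega)]
      have hh : (-(-i) - 1).toNat = (i-1).toNat := by omega
      rw [hh]
  have hfc : f = cj E (Equiv.neg ℤ) := by
    ext x
    rw [cj_apply]
    have := hinter (E.symm x)
    rw [E.apply_symm_apply] at this
    exact this
  rw [hfc, neg_eq_sh_mul_ρ1, cj_mul]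
  exact Subgroup.mul_mem _ (Subgroup.subset_closure (SC_sh.cj).ringed)
    (cj_fpf_involution_mem_closure E)

end IAux

namespace IAux
open Equiv Function Set

variable {Ω : Type*} [Countable Ω] [Infinite Ω]

lemma finite_support_mem_closure (σ : Perm Ω) (h : {x | σ x ≠ x}.Finite) :
    σ ∈ Subgroup.closure (RingedSet Ω) := by
  haveI : Encodable Ω := Encodable.ofCountable _
  haveI : Denumerable Ω := Denumerable.ofEncodableOfInfinite _
  set E0 : ℤ ≃ Ω := (Denumerable.eqv ℤ).trans (Denumerable.eqv Ω).symm with hE0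
  set c : Perm Ω := cj E0 sh with hc
  have hcsc : SC c := SC_sh.cj
  have hcR : c ∈ RingedSet Ω := hcsc.ringed
  have hσc : σ * c ∈ RingedSet Ω := by
    apply perturb (τ₀ := c) _ hcR
    have hsub : {x | (σ * c) x ≠ c x} ⊆ ⇑c ⁻¹' {y | σ y ≠ y} := by
      intro x hx
      simp only [Set.mem_setOf_eq, Equiv.Perm.mul_apply] at hx ⊢
      exact hx
    exact (h.preimage (c.injective.injOn)).subset hsub
  have : σ = (σ * c) * c⁻¹ := by group
  rw [this]
  exact Subgroup.mul_mem _ (Subgroup.subset_closure hσc)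
    (Subgroup.inv_mem _ (Subgroup.subset_closure hcR))

end IAux

namespace IAux
open Equiv Function Set

lemma subpair_of_prodBool {S : Type*} (e : S ≃ ℕ × Bool) :
    ∃ q : S → S, (∀ t, q (q t) = t) ∧ (∀ t, q t ≠ t) := by
  refine ⟨fun t => e.symm ((e t).1, !(e t).2), ?_, ?_⟩
  · intro t
    simp
  · intro t h
    apply_fun e at h
    have h2 := congrArg Prod.snd h
    simp at h2

lemma subpair_of_infinite {Ω : Type*} [Countable Ω] (S : Set Ω) (hS : S.Infinite) :
    ∃ q : ↥S → ↥S, (∀ t, q (q t) = t) ∧ (∀ t, q t ≠ t) := by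
  haveI : Infinite ↥S := hS.to_subtype
  haveI : Encodable ↥S := Encodable.ofCountable _
  haveI : Denumerable ↥S := Denumerable.ofEncodableOfInfinite _
  exact subpair_of_prodBool (((Denumerable.eqv ↥S).trans
    Equiv.boolProdNatEquivNat.symm).trans (Equiv.prodComm Bool ℕ))

end IAux

namespace IAux
open Equiv Function Set

variable {Ω : Type*} [Countable Ω] [Infinite Ω]

lemma mixed_mem_closure (f : Perm Ω) (hf : ∀ x, f (f x) = x)
    (hFinf : {x | f x = x}.Infinite) (hMinf : {x | f x ≠ x}.Infinite) :
    f ∈ Subgroup.closure (RingedSet Ω) := by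
  classical
  obtain ⟨enc, henc⟩ := exists_injective_nat Ω
  set F : Set Ω := {x | f x = x} with hFdef
  set T : Set Ω := {x | enc x < enc (f x)} with hTdef
  have hTF : ∀ x ∈ T, x ∉ F := by
    intro x hx hxF
    simp only [hTdef, Set.mem_setOf_eq] at hx
    simp only [hFdef, Set.mem_setOf_eq] at hxF
    rw [hxF] at hx; omega
  have hT1 : ∀ x ∈ T, f x ∉ T := by
    intro x hx hfx
    simp only [hTdef, Set.mem_setOf_eq, hf] at hx hfx
    omega
  have hT2 : ∀ x, x ∉ T → x ∉ F → f x ∈ T := by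
    intro x hx hxF
    simp only [hTdef, Set.mem_setOf_eq, hf] at hx ⊢
    have hne : f x ≠ x := hxF
    have : enc (f x) ≠ enc x := fun h => hne (henc h)
    omega
  have hFnotfix : ∀ x, x ∉ F → f x ∉ F := by
    intro x hx hfx
    have h1 : f (f x) = f x := hfx
    rw [hf] at h1
    exact hx (show f x = x from h1.symm)
  have hTinf : T.Infinite := by
    intro hfin
    apply hMinf
    have hsub : {x | f x ≠ x} ⊆ T ∪ f '' T := by
      intro x hx
      by_cases hxT : x ∈ T
      · exact Or.inl hxT
      · exact Or.inr ⟨f x, hT2 x hxT hx, hf x⟩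
    exact (hfin.union (hfin.image f)).subset hsub
  obtain ⟨pF, hpF2, hpFne⟩ := subpair_of_infinite F hFinf
  obtain ⟨qT, hqT2, hqTne⟩ := subpair_of_infinite T hTinf
  set w0 : Ω → Ω := fun x =>
    if hx : x ∈ F then (pF ⟨x, hx⟩ : Ω)
    else if hx' : x ∈ T then (qT ⟨x, hx'⟩ : Ω)
    else f (qT ⟨f x, hT2 x hx' hx⟩ : Ω) with hw0
  have hwF : ∀ x (hx : x ∈ F), w0 x = (pF ⟨x, hx⟩ : Ω) := by
    intro x hx; simp only [hw0, dif_pos hx]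
  have hwT : ∀ x (hx' : x ∈ T), w0 x = (qT ⟨x, hx'⟩ : Ω) := by
    intro x hx'
    have hx : x ∉ F := hTF x hx'
    simp only [hw0, dif_neg hx, dif_pos hx']
  have hwO : ∀ x (hx : x ∉ F) (hx' : x ∉ T), w0 x = f (qT ⟨f x, hT2 x hx' hx⟩ : Ω) := by
    intro x hx hx'; simp only [hw0, dif_neg hx, dif_neg hx']
  have hpFmem : ∀ t, (pF t : Ω) ∈ F := fun t => (pF t).2
  have hqTmem : ∀ t, (qT t : Ω) ∈ T := fun t => (qT t).2
  have hfixF : ∀ x ∈ F, f x = x := fun x hx => hx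
  -- involutivity of w0
  have hwinv : Function.Involutive w0 := by
    intro x
    by_cases hx : x ∈ F
    · rw [hwF x hx, hwF _ (hpFmem _)]
      rw [show (⟨(pF ⟨x, hx⟩ : Ω), hpFmem _⟩ : ↥F) = pF ⟨x, hx⟩ from Subtype.coe_eta _ _]
      rw [hpF2]
    · by_cases hx' : x ∈ T
      · rw [hwT x hx', hwT _ (hqTmem _)]
        rw [show (⟨(qT ⟨x, hx'⟩ : Ω), hqTmem _⟩ : ↥T) = qT ⟨x, hx'⟩ from Subtype.coe_eta _ _]
        rw [hqT2]
      · rw [hwO x hx hx']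
        set s : ↥T := qT ⟨f x, hT2 x hx' hx⟩ with hs
        have hsT : (s : Ω) ∈ T := hqTmem _
        have hfsF : f (s : Ω) ∉ F := by
          intro hmem
          have : f (f (s : Ω)) = f (s : Ω) := hfixF _ hmem
          rw [hf] at this
          exact hTF _ hsT (by rw [hFdef]; exact this.symm)
        have hfsT : f (s : Ω) ∉ T := hT1 _ hsT
        rw [hwO _ hfsF hfsT]
        have hcoe : (⟨f (f (s : Ω)), hT2 _ hfsT hfsF⟩ : ↥T) = s := Subtype.ext (hf _)
        rw [hcoe, hs, hqT2, hf]
  set w : Perm Ω := hwinv.toPerm with hwdef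
  have hwapp : ∀ x, w x = w0 x := fun x => rfl
  -- w is fixed point free
  have hwfpf : ∀ x, w x ≠ x := by
    intro x h
    rw [hwapp] at h
    by_cases hx : x ∈ F
    · rw [hwF x hx] at h
      exact hpFne _ (Subtype.coe_injective (by simpa using h))
    · by_cases hx' : x ∈ T
      · rw [hwT x hx'] at h
        exact hqTne _ (Subtype.coe_injective (by simpa using h))
      · rw [hwO x hx hx'] at h
        have h2 := congrArg f h
        rw [hf] at h2
        exact hqTne _ (Subtype.ext h2)
  -- commutation
  have hcomm : ∀ x, f (w x) = w (f x) := by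
    intro x
    rw [hwapp, hwapp]
    by_cases hx : x ∈ F
    · rw [hwF x hx, hfixF _ (hpFmem _), hfixF _ hx]
      rw [hwF x hx]
    · by_cases hx' : x ∈ T
      · rw [hwT x hx']
        have hfxF : f x ∉ F := hFnotfix x hx
        have hfxT : f x ∉ T := hT1 x hx'
        rw [hwO _ hfxF hfxT]
        have harg : (⟨f (f x), hT2 _ hfxT hfxF⟩ : ↥T) = ⟨x, hx'⟩ := Subtype.ext (hf x)
        rw [harg]
      · rw [hwO x hx hx', hf]
        have hfxT : f x ∈ T := hT2 x hx' hx
        rw [hwT _ hfxT]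
  -- f * w is a fixed point free involution
  have hfw_inv : ∀ x, (f * w) ((f * w) x) = x := by
    intro x
    simp only [Equiv.Perm.mul_apply]
    have h1 : w (f (w x)) = f (w (w x)) := (hcomm (w x)).symm
    rw [h1]
    have h2 : w (w x) = x := hwinv x
    rw [h2, hf]
  have hfw_fpf : ∀ x, (f * w) x ≠ x := by
    intro x h
    simp only [Equiv.Perm.mul_apply] at h
    by_cases hx : x ∈ F
    · rw [hwapp, hwF x hx, hfixF _ (hpFmem _)] at h
      exact hpFne _ (Subtype.coe_injective (by simpa using h))
    · by_cases hx' : x ∈ T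
      · rw [hwapp, hwT x hx'] at h
        exact hT1 _ (hqTmem _) (by rw [h]; exact hx')
      · rw [hwapp, hwO x hx hx', hf] at h
        exact hx' (by rw [← h]; exact hqTmem _)
  have hw_mem : w ∈ Subgroup.closure (RingedSet Ω) :=
    fpf_mem_closure w (fun x => hwinv x) hwfpf
  have hfw_mem : f * w ∈ Subgroup.closure (RingedSet Ω) :=
    fpf_mem_closure (f * w) hfw_inv hfw_fpf
  have : f = (f * w) * w⁻¹ := by group
  rw [this]
  exact Subgroup.mul_mem _ hfw_mem (Subgroup.inv_mem _ hw_mem)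

end IAux

namespace IAux
open Equiv Function Set

variable {Ω : Type*} [Countable Ω] [Infinite Ω]

lemma finiteF_mem_closure (f : Perm Ω) (hf : ∀ x, f (f x) = x)
    (hFfin : {x | f x = x}.Finite) : f ∈ Subgroup.closure (RingedSet Ω) := by
  classical
  set F : Set Ω := {x | f x = x} with hFdef
  have hFnotfix : ∀ x, x ∉ F → f x ∉ F := by
    intro x hx hfx
    have h1 : f (f x) = f x := hfx
    rw [hf] at h1
    exact hx (show f x = x from h1.symm)
  haveI : Fintype ↥F := hFfin.fintype
  set n : ℕ := Fintype.card ↥F with hn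
  set eqF : ↥F ≃ Fin n := Fintype.equivFin ↥F with heqF
  set m2 : ℕ := 2 * (n / 2) with hm2
  set pnat : ℕ → ℕ := fun j => if j < m2 then (if j % 2 = 0 then j + 1 else j - 1) else j
    with hpnat
  have hp_inv : ∀ j, pnat (pnat j) = j := by
    intro j
    simp only [hpnat]
    split_ifs <;> omega
  have hp_lt : ∀ j, j < n → pnat j < n := by
    intro j hj
    simp only [hpnat]
    split_ifs <;> omega
  have hp_ne : ∀ j, j < m2 → pnat j ≠ j := by
    intro j hj
    simp only [hpnat]
    split_ifs <;> omega
  have hp_fix : ∀ j, ¬ j < m2 → pnat j = j := by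
    intro j hj
    simp only [hpnat]
    rw [if_neg hj]
  set pF : ↥F → ↥F := fun t => eqF.symm ⟨pnat (eqF t), hp_lt _ (eqF t).2⟩ with hpF
  have hpFval : ∀ t, ((eqF (pF t)) : ℕ) = pnat (eqF t) := by
    intro t
    simp only [hpF, eqF.apply_symm_apply]
  have hpF2 : ∀ t, pF (pF t) = t := by
    intro t
    apply eqF.injective
    apply Fin.ext
    rw [hpFval, hpFval, hp_inv]
  have hpFne : ∀ t, ((eqF t : ℕ) < m2) → pF t ≠ t := by
    intro t ht h
    have := congrArg (fun s => (eqF s : ℕ)) h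
    simp only [hpFval] at this
    exact hp_ne _ ht this
  have hpFfix : ∀ t, ¬((eqF t : ℕ) < m2) → pF t = t := by
    intro t ht
    apply eqF.injective
    apply Fin.ext
    rw [hpFval, hp_fix _ ht]
  set u0 : Ω → Ω := fun x => if hx : x ∈ F then (pF ⟨x, hx⟩ : Ω) else x with hu0
  have hu0F : ∀ x (hx : x ∈ F), u0 x = (pF ⟨x, hx⟩ : Ω) := by
    intro x hx; simp only [hu0, dif_pos hx]
  have hu0O : ∀ x, x ∉ F → u0 x = x := by
    intro x hx; simp only [hu0, dif_neg hx]
  have hpFmem : ∀ t, (pF t : Ω) ∈ F := fun t => (pF t).2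
  have hu0inv : Function.Involutive u0 := by
    intro x
    by_cases hx : x ∈ F
    · rw [hu0F x hx, hu0F _ (hpFmem _)]
      rw [show (⟨(pF ⟨x, hx⟩ : Ω), hpFmem _⟩ : ↥F) = pF ⟨x, hx⟩ from Subtype.coe_eta _ _]
      rw [hpF2]
    · rw [hu0O x hx, hu0O x hx]
  set u : Perm Ω := hu0inv.toPerm with hudef
  have huapp : ∀ x, u x = u0 x := fun x => rfl
  have hu_mem : u ∈ Subgroup.closure (RingedSet Ω) := by
    apply finite_support_mem_closure
    apply hFfin.subset
    intro x hx
    simp only [Set.mem_setOf_eq, huapp] at hx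
    by_contra hxF
    exact hx (hu0O x hxF)
  have hfixF : ∀ x ∈ F, f x = x := fun x hx => hx
  have hcomm : ∀ x, f (u x) = u (f x) := by
    intro x
    rw [huapp, huapp]
    by_cases hx : x ∈ F
    · rw [hu0F x hx, hfixF _ (hpFmem _), hfixF _ hx, hu0F x hx]
    · rw [hu0O x hx, hu0O _ (hFnotfix x hx)]
  set f2 : Perm Ω := f * u with hf2
  have hf2app : ∀ x, f2 x = f (u x) := fun x => rfl
  have hf2inv : ∀ x, f2 (f2 x) = x := by
    intro x
    rw [hf2app, hf2app]
    have h1 : u (f (u x)) = f (u (u x)) := (hcomm (u x)).symm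
    rw [h1]
    have h2 : u (u x) = x := hu0inv x
    rw [h2, hf]
  have hf2F : ∀ x (hx : x ∈ F), f2 x = (pF ⟨x, hx⟩ : Ω) := by
    intro x hx
    rw [hf2app, huapp, hu0F x hx, hfixF _ (hpFmem _)]
  have hf2O : ∀ x, x ∉ F → f2 x = f x := by
    intro x hx
    rw [hf2app, huapp, hu0O x hx]
  have hfinal : f2 ∈ Subgroup.closure (RingedSet Ω) := by
    rcases Nat.even_or_odd n with hev | hodd
    · -- even: f2 is fixed point free
      apply fpf_mem_closure f2 hf2inv
      intro x h
      by_cases hx : x ∈ F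
      · rw [hf2F x hx] at h
        have hlt : ((eqF ⟨x, hx⟩ : Fin n) : ℕ) < m2 := by
          obtain ⟨mm, hmm⟩ := hev
          have hb := (eqF ⟨x, hx⟩).2
          omega
        exact hpFne _ hlt (Subtype.coe_injective (by simpa using h))
      · rw [hf2O x hx] at h
        exact hx (show f x = x from h)
    · -- odd: f2 has exactly one fixed point
      obtain ⟨mm, hmm⟩ := hodd
      have hn1 : 1 ≤ n := by omega
      have hm2n : m2 = n - 1 := by omega
      set a : Ω := ((eqF.symm ⟨n - 1, by omega⟩ : ↥F) : Ω) with ha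
      have haF : a ∈ F := (eqF.symm ⟨n - 1, by omega⟩).2
      apply one_fixed_mem_closure f2 hf2inv a
      intro x
      constructor
      · intro h
        by_cases hx : x ∈ F
        · rw [hf2F x hx] at h
          have hfixt : pF ⟨x, hx⟩ = ⟨x, hx⟩ := Subtype.coe_injective (by simpa using h)
          have hidx : ¬ ((eqF ⟨x, hx⟩ : ℕ) < m2) := by
            intro hlt
            exact hpFne _ hlt hfixt
          have hval : ((eqF ⟨x, hx⟩ : Fin n) : ℕ) = n - 1 := by
            have := (eqF ⟨x, hx⟩).2
            omega
          have : eqF ⟨x, hx⟩ = ⟨n - 1, by omega⟩ := Fin.ext hval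
          have hxa : (⟨x, hx⟩ : ↥F) = eqF.symm ⟨n - 1, by omega⟩ := by
            rw [← this, eqF.symm_apply_apply]
          rw [ha]
          exact congrArg Subtype.val hxa
        · rw [hf2O x hx] at h
          exact absurd (show f x = x from h) hx
      · intro h
        subst h
        rw [hf2F a haF]
        have hcoe : (⟨a, haF⟩ : ↥F) = eqF.symm ⟨n - 1, by omega⟩ := Subtype.ext rfl
        have hidx : ((eqF (⟨a, haF⟩ : ↥F)) : ℕ) = n - 1 := by
          rw [hcoe, eqF.apply_symm_apply]
        have : pF ⟨a, haF⟩ = ⟨a, haF⟩ := hpFfix _ (by omega)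
        rw [this]
  have : f = f2 * u⁻¹ := by rw [hf2]; group
  rw [this]
  exact Subgroup.mul_mem _ hfinal (Subgroup.inv_mem _ hu_mem)

end IAux

theorem involutions_in_closure_ringed {Ω : Type*} [Countable Ω] [Infinite Ω] :
    (∀ f : Equiv.Perm Ω, orderOf f = 2 → f ∈ Subgroup.closure (RingedSet Ω)) ∧
    (∀ f : Equiv.Perm Ω, orderOf f = 2 → (∀ x, f x ≠ x) →
      ∃ g h : Equiv.Perm Ω, (∀ x, orbitOf g x = Set.univ) ∧
        (∀ x, orbitOf h x = Set.univ) ∧ f = g * h) := by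
  have hinv : ∀ f : Equiv.Perm Ω, orderOf f = 2 → ∀ x, f (f x) = x := by
    intro f hord x
    have h2 : f ^ 2 = 1 := by rw [← hord]; exact pow_orderOf_eq_one f
    have : (f ^ 2) x = x := by rw [h2]; rfl
    rw [sq, Equiv.Perm.mul_apply] at this
    exact this
  constructor
  · intro f hord
    by_cases hM : {x | f x ≠ x}.Finite
    · exact IAux.finite_support_mem_closure f hM
    · by_cases hF : {x | f x = x}.Finite
      · exact IAux.finiteF_mem_closure f (hinv f hord) hF
      · exact IAux.mixed_mem_closure f (hinv f hord) hF hM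
  · intro f hord hfpf
    obtain ⟨g, h, hg, hh, hfeq⟩ := IAux.fpf_eq_two_sc f (hinv f hord) hfpf
    exact ⟨g, h, hg, hh, hfeq⟩
end

section
/- For a countably infinite set Ω, every locally finite permutation lies in the subgroup generated by the set W of wild permutations, i.e. LF ⊆ ⟨W⟩. -/
theorem Equiv.Perm.inv_apply_self {α : Type*} (f : Equiv.Perm α) (x : α) : f⁻¹ (f x) = x :=
  f.symm_apply_apply x

theorem Equiv.Perm.apply_inv_self {α : Type*} (f : Equiv.Perm α) (x : α) : f (f⁻¹ x) = x :=
  f.apply_symm_apply x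

namespace WildAux
open Equiv Set

variable {Ω : Type*}

lemma mem_orbit_iff {f : Equiv.Perm Ω} {x y : Ω} : y ∈ orbitOf f x ↔ f.SameCycle x y :=
  Iff.rfl

/-- The quotient of `Ω` by the same-cycle relation of `f`. -/
abbrev Q (f : Equiv.Perm Ω) := Quotient (Equiv.Perm.SameCycle.setoid f)

def mk (f : Equiv.Perm Ω) (x : Ω) : Q f := Quotient.mk _ x

/-- Representative of an orbit. -/
noncomputable def rp (f : Equiv.Perm Ω) (q : Q f) : Ω := q.out

lemma mk_rp (f : Equiv.Perm Ω) (q : Q f) : mk f (rp f q) = q := q.out_eq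

attribute [local instance] Classical.propDecidable

lemma mk_eq_iff {f : Equiv.Perm Ω} {x y : Ω} : mk f x = mk f y ↔ f.SameCycle x y := by
  constructor
  · exact fun h => Quotient.exact h
  · exact fun h => Quotient.sound h

lemma mk_apply (f : Equiv.Perm Ω) (x : Ω) : mk f (f x) = mk f x :=
  mk_eq_iff.2 ⟨-1, by simp⟩

lemma mk_inv_apply (f : Equiv.Perm Ω) (x : Ω) : mk f (f⁻¹ x) = mk f x :=
  mk_eq_iff.2 ⟨1, by simp⟩

lemma rp_idem (f : Equiv.Perm Ω) (x : Ω) : rp f (mk f (rp f (mk f x))) = rp f (mk f x) := by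
  rw [mk_rp]

variable (f : Equiv.Perm Ω) (c : Q f ≃ ℕ × ℤ)

def nxt (q : Q f) : Q f := c.symm ((c q).1, (c q).2 + 1)
def prv (q : Q f) : Q f := c.symm ((c q).1, (c q).2 - 1)

lemma prv_nxt (q : Q f) : prv f c (nxt f c q) = q := by
  simp [prv, nxt]

lemma nxt_prv (q : Q f) : nxt f c (prv f c q) = q := by
  simp [prv, nxt]

/-- The wild permutation `σ`: follows `f` within each orbit, but jumps from the last
element of orbit `(i,m)` to the representative of orbit `(i,m+1)`. -/
noncomputable def sg : Equiv.Perm Ω where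
  toFun x := if f x = rp f (mk f x) then rp f (nxt f c (mk f x)) else f x
  invFun y := if y = rp f (mk f y) then f⁻¹ (rp f (prv f c (mk f y))) else f⁻¹ y
  left_inv x := by
    dsimp only
    by_cases h : f x = rp f (mk f x)
    · rw [if_pos h]
      have h1 : mk f (rp f (nxt f c (mk f x))) = nxt f c (mk f x) := mk_rp ..
      rw [if_pos (by rw [h1]), h1, prv_nxt, ← h, Equiv.Perm.inv_apply_self]
    · rw [if_neg h]
      have h1 : mk f (f x) = mk f x := mk_apply ..
      rw [if_neg (by rw [h1]; exact h), Equiv.Perm.inv_apply_self]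
  right_inv y := by
    dsimp only
    by_cases h : y = rp f (mk f y)
    · rw [if_pos h]
      have h2 : mk f (f⁻¹ (rp f (prv f c (mk f y)))) = prv f c (mk f y) := by
        rw [mk_inv_apply, mk_rp]
      have h3 : f (f⁻¹ (rp f (prv f c (mk f y)))) =
          rp f (mk f (f⁻¹ (rp f (prv f c (mk f y))))) := by
        rw [Equiv.Perm.apply_inv_self, h2]
      rw [if_pos h3, h2, nxt_prv]
      exact h.symm
    · rw [if_neg h]
      have h1 : mk f (f⁻¹ y) = mk f y := mk_inv_apply ..
      have h2 : ¬ (f (f⁻¹ y) = rp f (mk f (f⁻¹ y))) := by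
        rw [Equiv.Perm.apply_inv_self, h1]; exact h
      rw [if_neg h2, Equiv.Perm.apply_inv_self]

lemma sg_apply (x : Ω) :
    sg f c x = if f x = rp f (mk f x) then rp f (nxt f c (mk f x)) else f x := rfl

/-- chain index is preserved by σ. -/
lemma mk_sg (x : Ω) : (c (mk f (sg f c x))).1 = (c (mk f x)).1 := by
  rw [sg_apply]
  by_cases h : f x = rp f (mk f x)
  · rw [if_pos h, mk_rp]; simp [nxt]
  · rw [if_neg h, mk_apply]

noncomputable def tau : Equiv.Perm Ω := (sg f c)⁻¹ * f

lemma tau_apply (x : Ω) :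
    tau f c x = if f x = rp f (mk f x) then f⁻¹ (rp f (prv f c (mk f x))) else x := by
  have : tau f c x = (sg f c).symm (f x) := rfl
  rw [this]
  show (if f x = rp f (mk f (f x)) then f⁻¹ (rp f (prv f c (mk f (f x)))) else f⁻¹ (f x)) = _
  rw [mk_apply]
  by_cases h : f x = rp f (mk f x)
  · rw [if_pos h, if_pos h]
  · rw [if_neg h, if_neg h, Equiv.Perm.inv_apply_self]

lemma mk_tau (x : Ω) : (c (mk f (tau f c x))).1 = (c (mk f x)).1 := by
  rw [tau_apply]
  by_cases h : f x = rp f (mk f x)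
  · rw [if_pos h, mk_inv_apply, mk_rp]; simp [prv]
  · rw [if_neg h]

/-- A chain-index-preserving permutation preserves index along all powers. -/
lemma idx_zpow (g : Equiv.Perm Ω) (ch : Ω → ℕ) (h : ∀ x, ch (g x) = ch x) :
    ∀ (k : ℤ) (x : Ω), ch ((g ^ k) x) = ch x := by
  have hinv : ∀ x, ch (g⁻¹ x) = ch x := by
    intro x; conv_rhs => rw [← Equiv.Perm.apply_inv_self g x, h]
  have hn : ∀ (n : ℕ) (x : Ω), ch ((g ^ n) x) = ch x := by
    intro n
    induction n with
    | zero => simp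
    | succ n ih => intro x; rw [pow_succ, Equiv.Perm.mul_apply, ih, h]
  intro k x
  have hn' : ∀ (n : ℕ) (x : Ω), ch ((g⁻¹ ^ n) x) = ch x := by
    intro n
    induction n with
    | zero => simp
    | succ n ih => intro x; rw [pow_succ, Equiv.Perm.mul_apply, ih, hinv]
  cases k with
  | ofNat n => rw [Int.ofNat_eq_coe, zpow_natCast]; exact hn n x
  | negSucc n => rw [zpow_negSucc, ← inv_pow]; exact hn' (n+1) x

lemma idx_const_on_orbit (g : Equiv.Perm Ω) (ch : Ω → ℕ) (h : ∀ x, ch (g x) = ch x)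
    {x y : Ω} (hy : y ∈ orbitOf g x) : ch y = ch x := by
  obtain ⟨k, rfl⟩ := hy
  exact idx_zpow g ch h k x

/-- Sufficient criterion for wildness. -/
lemma wild_of (g : Equiv.Perm Ω) (a : ℕ → Ω)
    (h1 : ∀ i, (orbitOf g (a i)).Infinite)
    (h2 : ∀ i j : ℕ, orbitOf g (a i) = orbitOf g (a j) → i = j) :
    g ∈ WildSet Ω := by
  exact Set.infinite_of_injective_forall_mem (f := fun i => orbitOf g (a i))
    (fun i j h => h2 i j h) (fun i => ⟨⟨a i, rfl⟩, h1 i⟩)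


/-- last element of an orbit. -/
noncomputable def lst (q : Q f) : Ω := f⁻¹ (rp f q)

lemma mk_lst (q : Q f) : mk f (lst f q) = q := by
  rw [lst, mk_inv_apply, mk_rp]

lemma mk_pow (n : ℕ) (x : Ω) : mk f ((f ^ n) x) = mk f x := by
  induction n with
  | zero => simp
  | succ n ih => rw [pow_succ', Equiv.Perm.mul_apply, mk_apply, ih]

lemma sg_lst (q : Q f) : sg f c (lst f q) = rp f (nxt f c q) := by
  rw [sg_apply]
  have hc : f (lst f q) = rp f (mk f (lst f q)) := by
    rw [lst, Equiv.Perm.apply_inv_self, mk_inv_apply, mk_rp]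
  rw [if_pos hc, mk_lst]

lemma tau_lst (q : Q f) : tau f c (lst f q) = lst f (prv f c q) := by
  rw [tau_apply]
  have hc : f (lst f q) = rp f (mk f (lst f q)) := by
    rw [lst, Equiv.Perm.apply_inv_self, mk_inv_apply, mk_rp]
  rw [if_pos hc, mk_lst, lst]

lemma exists_pow_eq_inv {f : Equiv.Perm Ω} {x : Ω} (hf : (orbitOf f x).Finite) :
    ∃ n : ℕ, (f ^ n) x = f⁻¹ x := by
  have hni : ¬ Function.Injective (fun n : ℕ => (f ^ n) x) := by
    intro hinj
    have hsub : Set.range (fun n : ℕ => (f ^ n) x) ⊆ orbitOf f x := by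
      rintro _ ⟨n, rfl⟩
      exact ⟨(n : ℤ), by show (f ^ (n : ℤ)) x = (f ^ n) x; rw [zpow_natCast]⟩
    exact ((Set.infinite_range_of_injective hinj).mono hsub) hf
  rw [Function.not_injective_iff] at hni
  obtain ⟨a, b, hab, hne⟩ := hni
  wlog hlt : a < b generalizing a b
  · exact this b a hab.symm hne.symm (by omega)
  have hp : (f ^ (b - a)) x = x := by
    have h1 : (f ^ a) ((f ^ (b - a)) x) = (f ^ a) x := by
      rw [← Equiv.Perm.mul_apply, ← pow_add]
      have : a + (b - a) = b := by omega
      rw [this, hab]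
    exact (f ^ a).injective h1
  refine ⟨b - a - 1, ?_⟩
  have h2 : f ((f ^ (b - a - 1)) x) = x := by
    rw [← Equiv.Perm.mul_apply, ← pow_succ']
    have : b - a - 1 + 1 = b - a := by omega
    rw [this, hp]
  have h3 := congrArg (fun z => f⁻¹ z) h2
  simpa using h3

/-- Within an orbit, σ connects the representative to the last element. -/
lemma sg_sameCycle_lst (hf : f ∈ LFset Ω) (q : Q f) :
    (sg f c).SameCycle (rp f q) (lst f q) := by
  have hex : ∃ n : ℕ, (f ^ n) (rp f q) = lst f q := by
    obtain ⟨n, hn⟩ := exists_pow_eq_inv (hf (rp f q))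
    exact ⟨n, hn⟩
  classical
  let n := Nat.find hex
  have hn : (f ^ n) (rp f q) = lst f q := Nat.find_spec hex
  have key : ∀ j, j ≤ n → ((sg f c) ^ j) (rp f q) = (f ^ j) (rp f q) := by
    intro j hj
    induction j with
    | zero => simp
    | succ j ih =>
        have hjn : j < n := by omega
        rw [pow_succ', Equiv.Perm.mul_apply, pow_succ', Equiv.Perm.mul_apply,
          ih (by omega), sg_apply]
        have hmk : mk f ((f ^ j) (rp f q)) = q := by rw [mk_pow, mk_rp]
        have hcond : ¬ (f ((f ^ j) (rp f q)) = rp f (mk f ((f ^ j) (rp f q)))) := by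
          rw [hmk]
          intro hc
          have h5 := congrArg (fun z => f⁻¹ z) hc
          simp only [Equiv.Perm.inv_apply_self] at h5
          have h6 : (f ^ j) (rp f q) = lst f q := by rw [lst]; exact h5
          exact Nat.find_min hex hjn h6
        rw [if_neg hcond]
  exact ⟨(n : ℤ), by rw [zpow_natCast, key n le_rfl, hn]⟩

lemma sg_sameCycle_nxt (hf : f ∈ LFset Ω) (q : Q f) :
    (sg f c).SameCycle (rp f q) (rp f (nxt f c q)) :=
  (sg_sameCycle_lst f c hf q).trans ⟨1, by simp [sg_lst]⟩

lemma rp_injective : Function.Injective (rp f) := Quotient.out_injective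

lemma ch_rp (p : ℕ × ℤ) : (c (mk f (rp f (c.symm p)))).1 = p.1 := by
  rw [mk_rp]; simp

lemma ch_lst (p : ℕ × ℤ) : (c (mk f (lst f (c.symm p)))).1 = p.1 := by
  rw [mk_lst]; simp

lemma sg_wild (hf : f ∈ LFset Ω) : sg f c ∈ WildSet Ω := by
  apply wild_of (a := fun i => rp f (c.symm (i, 0)))
  · intro i
    have hmem : ∀ m : ℕ, rp f (c.symm (i, m)) ∈ orbitOf (sg f c) (rp f (c.symm (i, 0))) := by
      intro m
      rw [mem_orbit_iff]
      induction m with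
      | zero => exact Equiv.Perm.SameCycle.refl _ _
      | succ m ih =>
          refine ih.trans ?_
          have : nxt f c (c.symm (i, (m : ℤ))) = c.symm (i, (m : ℤ) + 1) := by simp [nxt]
          have h2 := sg_sameCycle_nxt f c hf (c.symm (i, (m : ℤ)))
          rw [this] at h2
          have h3 : ((m : ℤ) + 1) = ((m + 1 : ℕ) : ℤ) := by push_cast; ring
          rwa [h3] at h2
    apply Set.infinite_of_injective_forall_mem (f := fun m : ℕ => rp f (c.symm (i, m)))
    · intro a b hab
      have := rp_injective f hab
      have := c.symm.injective this
      simpa using this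
    · exact hmem
  · intro i j hij
    have hmem : rp f (c.symm (i, 0)) ∈ orbitOf (sg f c) (rp f (c.symm (j, 0))) := by
      rw [← hij, mem_orbit_iff]
    have := idx_const_on_orbit (sg f c) (fun x => (c (mk f x)).1) (mk_sg f c) hmem
    simpa [ch_rp] using this

lemma tau_wild : tau f c ∈ WildSet Ω := by
  apply wild_of (a := fun i => lst f (c.symm (i, 0)))
  · intro i
    have step : ∀ m : ℤ, tau f c (lst f (c.symm (i, m))) = lst f (c.symm (i, m - 1)) := by
      intro m
      rw [tau_lst]
      congr 1
      simp [prv]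
    have hmem : ∀ m : ℤ, lst f (c.symm (i, m)) ∈ orbitOf (tau f c) (lst f (c.symm (i, 0))) := by
      intro m
      rw [mem_orbit_iff]
      induction m using Int.induction_on with
      | zero => exact Equiv.Perm.SameCycle.refl _ _
      | succ k ih =>
          refine ih.trans ?_
          have h1 : (tau f c).SameCycle (lst f (c.symm (i, (k : ℤ) + 1))) (lst f (c.symm (i, (k : ℤ)))) :=
            ⟨1, by simp only [zpow_one, step]; norm_num⟩
          exact h1.symm
      | pred k ih =>
          refine ih.trans ?_
          exact ⟨1, by simp only [zpow_one, step]⟩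
    apply Set.infinite_of_injective_forall_mem (f := fun m : ℤ => lst f (c.symm (i, m)))
    · intro a b hab
      have h1 := f⁻¹.injective hab
      have := c.symm.injective (rp_injective f h1)
      simpa using this
    · exact hmem
  · intro i j hij
    have hmem : lst f (c.symm (i, 0)) ∈ orbitOf (tau f c) (lst f (c.symm (j, 0))) := by
      rw [← hij, mem_orbit_iff]
    have := idx_const_on_orbit (tau f c) (fun x => (c (mk f x)).1) (mk_tau f c) hmem
    simpa [ch_lst] using this

lemma Q_infinite (hf : f ∈ LFset Ω) [Infinite Ω] : Infinite (Q f) := by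
  rw [← not_finite_iff_infinite]
  intro h
  have huniv : (Set.univ : Set Ω) ⊆ ⋃ q : Q f, orbitOf f (rp f q) := by
    intro x _
    refine Set.mem_iUnion.2 ⟨mk f x, ?_⟩
    rw [mem_orbit_iff]
    exact mk_eq_iff.1 (mk_rp f (mk f x))
  have hfin : (Set.univ : Set Ω).Finite :=
    Set.Finite.subset (Set.finite_iUnion fun q => hf (rp f q)) huniv
  exact Set.infinite_univ hfin

end WildAux

theorem LF_in_closure_wild {Ω : Type*} [Countable Ω] [Infinite Ω] :
    ∀ f : Equiv.Perm Ω, f ∈ LFset Ω → f ∈ Subgroup.closure (WildSet Ω) := by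
  intro f hf
  haveI : Infinite (WildAux.Q f) := WildAux.Q_infinite f hf
  haveI d1 : Denumerable (WildAux.Q f) := (nonempty_denumerable _).some
  haveI d2 : Denumerable (ℕ × ℤ) := (nonempty_denumerable _).some
  let c : WildAux.Q f ≃ ℕ × ℤ := (Denumerable.eqv _).trans (Denumerable.eqv _).symm
  have hσ := WildAux.sg_wild f c hf
  have hτ := WildAux.tau_wild f c
  have hfe : f = WildAux.sg f c * WildAux.tau f c := by
    rw [WildAux.tau]
    group
  rw [hfe]
  exact mul_mem (Subgroup.subset_closure hσ) (Subgroup.subset_closure hτ)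
end

section
/- For a countably infinite set Ω, each of the sets LF (locally finite permutations), R (permutations with finitely many orbits), and W (permutations with infinitely many infinite orbits) generates S(Ω). -/
open Equiv Equiv.Perm

section OrbitBasics

variable {α β : Type*}

lemma mem_orbitOf_self (f : Perm α) (x : α) : x ∈ orbitOf f x := ⟨0, rfl⟩

lemma zpow_mem_orbitOf (f : Perm α) (x : α) (k : ℤ) : (f ^ k) x ∈ orbitOf f x := ⟨k, rfl⟩

lemma orbitOf_zpow_apply (f : Perm α) (y : α) (j : ℤ) :
    orbitOf f ((f ^ j) y) = orbitOf f y := by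
  ext w
  constructor
  · rintro ⟨k, rfl⟩
    exact ⟨k + j, by show (f ^ (k + j)) y = (f ^ k) ((f ^ j) y); rw [zpow_add, Perm.mul_apply]⟩
  · rintro ⟨k, rfl⟩
    refine ⟨k - j, ?_⟩
    show (f ^ (k - j)) ((f ^ j) y) = (f ^ k) y
    rw [← Perm.mul_apply, ← zpow_add, sub_add_cancel]

lemma orbitOf_inv (f : Perm α) (x : α) : orbitOf f⁻¹ x = orbitOf f x := by
  ext w
  constructor
  · rintro ⟨k, rfl⟩
    exact ⟨-k, by show (f ^ (-k)) x = (f⁻¹ ^ k) x; rw [inv_zpow, ← zpow_neg]⟩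
  · rintro ⟨k, rfl⟩
    exact ⟨-k, by show (f⁻¹ ^ (-k)) x = (f ^ k) x; rw [inv_zpow, ← zpow_neg, neg_neg]⟩

/-- `permCongr` as a monoid hom. -/
def permCongrHom (e : α ≃ β) : Perm α →* Perm β where
  toFun := e.permCongr
  map_one' := by ext x; simp
  map_mul' f g := by ext x; simp

lemma permCongrHom_apply (e : α ≃ β) (f : Perm α) : _root_.permCongrHom e f = e.permCongr f := rfl

lemma orbitOf_permCongr (e : α ≃ β) (f : Perm α) (x : α) :
    orbitOf (e.permCongr f) (e x) = e '' orbitOf f x := by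
  have hz : ∀ k : ℤ, (e.permCongr f) ^ k = e.permCongr (f ^ k) := by
    intro k
    rw [← permCongrHom_apply, ← map_zpow, permCongrHom_apply]
  ext w
  constructor
  · rintro ⟨k, rfl⟩
    exact ⟨(f ^ k) x, ⟨k, rfl⟩, by show e _ = (e.permCongr f ^ k) (e x); rw [hz]; simp⟩
  · rintro ⟨v, ⟨k, rfl⟩, rfl⟩
    exact ⟨k, by show (e.permCongr f ^ k) (e x) = e ((f ^ k) x); rw [hz]; simp⟩

lemma permCongr_mul (e : α ≃ β) (f g : Perm α) :
    e.permCongr (f * g) = e.permCongr f * e.permCongr g :=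
  map_mul (_root_.permCongrHom e) f g

end OrbitBasics

section Invol
variable {Ω : Type*}

private lemma key_shift (g : Perm Ω) (y : Ω) {p q : ℤ} (h : (g ^ p) y = (g ^ q) y) (c : ℤ) :
    (g ^ (c - p)) y = (g ^ (c - q)) y := by
  have h0 : (g ^ (q - p)) y = y := by
    rw [sub_eq_neg_add, zpow_add, Perm.mul_apply, ← h, ← Perm.mul_apply, ← zpow_add,
      neg_add_cancel, zpow_zero, Perm.one_apply]
  calc (g ^ (c - p)) y = (g ^ (c - q + (q - p))) y := by ring_nf
    _ = (g ^ (c - q)) ((g ^ (q - p)) y) := by rw [zpow_add, Perm.mul_apply]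
    _ = (g ^ (c - q)) y := by rw [h0]

/-- Every permutation is a product of two involutions. -/
lemma exists_invol_factorization (g : Perm Ω) :
    ∃ a b : Perm Ω, a * a = 1 ∧ b * b = 1 ∧ g = a * b := by
  classical
  let s : Setoid Ω := ⟨g.SameCycle, ⟨fun x => SameCycle.refl g x, fun h => h.symm,
    fun h1 h2 => h1.trans h2⟩⟩
  let r : Ω → Ω := fun x => Quotient.out (Quotient.mk s x)
  have hr : ∀ x, g.SameCycle (r x) x := fun x => Quotient.mk_out (s := s) x
  have hreq : ∀ {x y}, g.SameCycle x y → r x = r y := by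
    intro x y h
    show (Quotient.mk s x).out = (Quotient.mk s y).out
    rw [Quotient.sound (a := x) (b := y) h]
  choose n hn using fun x => hr x
  -- A and B
  let A : Ω → Ω := fun x => (g ^ (-(n x))) (r x)
  let B : Ω → Ω := fun x => (g ^ (-1 - n x)) (r x)
  have hrA : ∀ x, r (A x) = r x := by
    intro x
    have sc1 : g.SameCycle (r x) (A x) := ⟨-(n x), rfl⟩
    exact hreq (sc1.symm.trans (hr x))
  have hrB : ∀ x, r (B x) = r x := by
    intro x
    have sc1 : g.SameCycle (r x) (B x) := ⟨-1 - n x, rfl⟩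
    exact hreq (sc1.symm.trans (hr x))
  have hA : Function.Involutive A := by
    intro x
    show (g ^ (-(n (A x)))) (r (A x)) = x
    rw [hrA]
    have h1 : (g ^ (n (A x))) (r (A x)) = A x := hn (A x)
    rw [hrA] at h1
    have h2 : (g ^ (n (A x))) (r x) = (g ^ (-(n x))) (r x) := h1
    have := key_shift g (r x) h2 0
    simp only [zero_sub, neg_neg] at this
    rw [this]
    exact hn x
  have hB : Function.Involutive B := by
    intro x
    show (g ^ (-1 - n (B x))) (r (B x)) = x
    rw [hrB]
    have h1 : (g ^ (n (B x))) (r (B x)) = B x := hn (B x)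
    rw [hrB] at h1
    have h2 : (g ^ (n (B x))) (r x) = (g ^ (-1 - n x)) (r x) := h1
    have := key_shift g (r x) h2 (-1)
    have h3 : (-1 : ℤ) - (-1 - n x) = n x := by ring
    rw [h3] at this
    rw [this]
    exact hn x
  have hAB : ∀ x, A (B x) = g x := by
    intro x
    show (g ^ (-(n (B x)))) (r (B x)) = g x
    rw [hrB]
    have h1 : (g ^ (n (B x))) (r (B x)) = B x := hn (B x)
    rw [hrB] at h1
    have h2 : (g ^ (n (B x))) (r x) = (g ^ (-1 - n x)) (r x) := h1
    have := key_shift g (r x) h2 0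
    simp only [zero_sub] at this
    rw [this]
    have h3 : -(-1 - n x) = 1 + n x := by ring
    rw [h3, zpow_add, Perm.mul_apply, zpow_one, hn x]
  refine ⟨hA.toPerm A, hB.toPerm B, ?_, ?_, ?_⟩
  · ext x; exact hA x
  · ext x; exact hB x
  · ext x; exact (hAB x).symm

/-- Involutions are locally finite. -/
lemma invol_orbit_subset (t : Perm Ω) (ht : t * t = 1) (x : Ω) :
    orbitOf t x ⊆ {x, t x} := by
  have ht2 : t ^ (2:ℤ) = 1 := by rw [zpow_two]; exact ht
  rintro w ⟨k, rfl⟩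
  rcases Int.even_or_odd k with ⟨m, hm⟩ | ⟨m, hm⟩
  · left
    show (t ^ k) x = x
    rw [hm, ← two_mul, zpow_mul]
    simp [ht2]
  · right
    show (t ^ k) x = t x
    rw [hm, zpow_add, zpow_mul]
    simp [ht2]

end Invol

section ZPerms

/-- The shift on ℤ. -/
def zS : Perm ℤ := Equiv.addRight (1 : ℤ)

lemma zS_zpow_apply (k : ℤ) : ∀ n : ℤ, (zS ^ k) n = n + k := by
  induction k using Int.induction_on with
  | zero => simp
  | succ k ih =>
      intro n
      rw [zpow_add_one, Perm.mul_apply, ih (zS n)]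
      show (n + 1) + k = n + (k + 1); ring
  | pred k ih =>
      intro n
      rw [sub_eq_add_neg, zpow_add, Perm.mul_apply, zpow_neg_one]
      have h1 : zS⁻¹ n = n - 1 := by
        rw [Perm.inv_eq_iff_eq]; show n = (n - 1) + 1; ring
      rw [h1, ih (n - 1)]; ring

lemma orbitOf_zS (n : ℤ) : orbitOf zS n = Set.univ := by
  ext m
  simp only [Set.mem_univ, iff_true]
  refine ⟨m - n, ?_⟩
  show (zS ^ (m - n)) n = m
  rw [zS_zpow_apply (m - n) n]; ring

lemma zS_mem_R : zS ∈ RingedSet ℤ := by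
  have : Set.range (orbitOf zS) ⊆ {Set.univ} := by
    rintro O ⟨n, rfl⟩; simp [orbitOf_zS]
  exact Set.Finite.subset (Set.finite_singleton _) this

lemma tauFun_involutive : Function.Involutive (fun n : ℤ => if Even n then n + 3 else n - 3) := by
  intro n
  by_cases h : Even n
  · have h3 : ¬ Even (n + 3) := by
      simp [Int.even_add, h]
      decide
    simp [h, h3]
  · have h3 : Even (n - 3) := by
      rw [Int.even_sub]
      simp [h]
      decide
    simp [h, h3]

/-- The involution pairing `n ↔ n+3` for even `n`. -/
def tau : Perm ℤ := tauFun_involutive.toPerm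

lemma tau_apply (n : ℤ) : tau n = if Even n then n + 3 else n - 3 := rfl

lemma tau_invol : tau * tau = 1 := by
  ext n; exact tauFun_involutive n

/-- The product `tau * zS`. -/
def sigma : Perm ℤ := tau * zS

lemma tau_eq_sigma_mul : tau = sigma * zS⁻¹ := by
  rw [sigma, mul_assoc, mul_inv_cancel, mul_one]

lemma zS_apply (n : ℤ) : zS n = n + 1 := rfl

lemma sigma_apply_even (n : ℤ) (h : Even n) : sigma n = n - 2 := by
  have h1 : ¬ Even (n + 1) := by simp [Int.even_add_one, h]
  show tau (zS n) = n - 2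
  rw [zS_apply, tau_apply]
  simp [h1]
  ring

lemma sigma_apply_odd (n : ℤ) (h : ¬ Even n) : sigma n = n + 4 := by
  have h1 : Even (n + 1) := by rw [Int.even_add_one]; exact h
  show tau (zS n) = n + 4
  rw [zS_apply, tau_apply]
  simp [h1]
  ring

lemma sigma_zpow_even (j : ℤ) : ∀ n : ℤ, Even n → (sigma ^ j) n = n - 2 * j := by
  induction j using Int.induction_on with
  | zero => intro n _; simp
  | succ k ih =>
      intro n hn
      have : sigma ^ ((k : ℤ) + 1) = sigma ^ (k : ℤ) * sigma := by rw [zpow_add_one]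
      rw [this, Perm.mul_apply, sigma_apply_even n hn, ih (n - 2) (by
        rcases hn with ⟨m, rfl⟩; exact ⟨m - 1, by ring⟩)]
      ring
  | pred k ih =>
      intro n hn
      have : sigma ^ (-(k : ℤ) - 1) = sigma ^ (-(k : ℤ)) * sigma⁻¹ := by
        rw [sub_eq_add_neg, zpow_add, zpow_neg_one]
      have hinv : sigma⁻¹ n = n + 2 := by
        rw [Perm.inv_eq_iff_eq,
          sigma_apply_even (n + 2) (by rcases hn with ⟨m, rfl⟩; exact ⟨m + 1, by ring⟩)]
        ring
      rw [this, Perm.mul_apply, hinv, ih (n + 2) (by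
        rcases hn with ⟨m, rfl⟩; exact ⟨m + 1, by ring⟩)]
      ring

lemma sigma_zpow_odd (j : ℤ) : ∀ n : ℤ, ¬ Even n → (sigma ^ j) n = n + 4 * j := by
  induction j using Int.induction_on with
  | zero => intro n _; simp
  | succ k ih =>
      intro n hn
      have : sigma ^ ((k : ℤ) + 1) = sigma ^ (k : ℤ) * sigma := by rw [zpow_add_one]
      rw [this, Perm.mul_apply, sigma_apply_odd n hn, ih (n + 4) (by
        intro ⟨m, hm⟩; exact hn ⟨m - 2, by omega⟩)]
      ring
  | pred k ih =>
      intro n hn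
      have : sigma ^ (-(k : ℤ) - 1) = sigma ^ (-(k : ℤ)) * sigma⁻¹ := by
        rw [sub_eq_add_neg, zpow_add, zpow_neg_one]
      have hinv : sigma⁻¹ n = n - 4 := by
        rw [Perm.inv_eq_iff_eq,
          sigma_apply_odd (n - 4) (by intro ⟨m, hm⟩; exact hn ⟨m + 2, by omega⟩)]
        ring
      rw [this, Perm.mul_apply, hinv, ih (n - 4) (by
        intro ⟨m, hm⟩; exact hn ⟨m + 2, by omega⟩)]
      ring

lemma sigma_orbit_cases (n : ℤ) :
    orbitOf sigma n = orbitOf sigma 0 ∨ orbitOf sigma n = orbitOf sigma 1 ∨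
      orbitOf sigma n = orbitOf sigma 3 := by
  by_cases h : Even n
  · left
    obtain ⟨m, rfl⟩ := h
    have : (sigma ^ (-m)) 0 = m + m := by
      rw [sigma_zpow_even (-m) 0 (by exact ⟨0, rfl⟩)]; ring
    rw [← this, orbitOf_zpow_apply]
  · have h' : ¬ (n % 2 = 0) := by rwa [Int.even_iff] at h
    have h4 : n % 4 = 1 ∨ n % 4 = 3 := by omega
    rcases h4 with h4 | h4
    · right; left
      have hd : (4:ℤ) ∣ n - 1 := Int.dvd_self_sub_of_emod_eq h4
      obtain ⟨c, hc⟩ := hd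
      have : (sigma ^ c) 1 = n := by
        rw [sigma_zpow_odd c 1 (by decide)]; omega
      rw [← this, orbitOf_zpow_apply]
    · right; right
      have hd : (4:ℤ) ∣ n - 3 := Int.dvd_self_sub_of_emod_eq h4
      obtain ⟨c, hc⟩ := hd
      have : (sigma ^ c) 3 = n := by
        rw [sigma_zpow_odd c 3 (by decide)]; omega
      rw [← this, orbitOf_zpow_apply]

lemma sigma_mem_R : sigma ∈ RingedSet ℤ := by
  have : Set.range (orbitOf sigma) ⊆ {orbitOf sigma 0, orbitOf sigma 1, orbitOf sigma 3} := by
    rintro O ⟨n, rfl⟩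
    rcases sigma_orbit_cases n with h | h | h <;> simp [h]
  exact Set.Finite.subset (by simp) this

lemma sigma_orbit_infinite (n : ℤ) : (orbitOf sigma n).Infinite := by
  by_cases h : Even n
  · refine Set.infinite_of_injective_forall_mem (f := fun k : ℕ => (sigma ^ (k:ℤ)) n) ?_ ?_
    · intro a b hab
      simp only [sigma_zpow_even _ n h] at hab
      omega
    · intro k; exact ⟨k, rfl⟩
  · refine Set.infinite_of_injective_forall_mem (f := fun k : ℕ => (sigma ^ (k:ℤ)) n) ?_ ?_
    · intro a b hab
      simp only [sigma_zpow_odd _ n h] at hab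
      omega
    · intro k; exact ⟨k, rfl⟩

end ZPerms

section Transfer
variable {α β M : Type*}

lemma sumCongr_zpow (a : Perm α) (b : Perm β) (k : ℤ) :
    (a.sumCongr b) ^ k = (a ^ k).sumCongr (b ^ k) := by
  have h1 : a.sumCongr b = Equiv.Perm.sumCongrHom α β (a, b) := rfl
  have h2 : (a ^ k, b ^ k) = (a, b) ^ k := rfl
  rw [h1, ← map_zpow, ← h2, Equiv.Perm.sumCongrHom_apply]

lemma orbitOf_sumCongr_inl (a : Perm α) (b : Perm β) (x : α) :
    orbitOf (a.sumCongr b) (Sum.inl x) = Sum.inl '' orbitOf a x := by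
  ext w
  constructor
  · rintro ⟨k, rfl⟩
    refine ⟨(a ^ k) x, ⟨k, rfl⟩, ?_⟩
    show Sum.inl ((a ^ k) x) = ((a.sumCongr b) ^ k) (Sum.inl x)
    rw [sumCongr_zpow]; simp
  · rintro ⟨v, ⟨k, rfl⟩, rfl⟩
    refine ⟨k, ?_⟩
    show ((a.sumCongr b) ^ k) (Sum.inl x) = Sum.inl ((a ^ k) x)
    rw [sumCongr_zpow]; simp

lemma orbitOf_sumCongr_inr (a : Perm α) (b : Perm β) (x : β) :
    orbitOf (a.sumCongr b) (Sum.inr x) = Sum.inr '' orbitOf b x := by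
  ext w
  constructor
  · rintro ⟨k, rfl⟩
    refine ⟨(b ^ k) x, ⟨k, rfl⟩, ?_⟩
    show Sum.inr ((b ^ k) x) = ((a.sumCongr b) ^ k) (Sum.inr x)
    rw [sumCongr_zpow]; simp
  · rintro ⟨v, ⟨k, rfl⟩, rfl⟩
    refine ⟨k, ?_⟩
    show ((a.sumCongr b) ^ k) (Sum.inr x) = Sum.inr ((b ^ k) x)
    rw [sumCongr_zpow]; simp

lemma mem_R_of_finite [Finite α] (f : Perm α) : f ∈ RingedSet α := Set.toFinite _

lemma mem_R_sum {a : Perm α} {b : Perm β} (ha : a ∈ RingedSet α) (hb : b ∈ RingedSet β) :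
    a.sumCongr b ∈ RingedSet (α ⊕ β) := by
  have hsub : Set.range (orbitOf (a.sumCongr b)) ⊆
      ((Sum.inl '' ·) '' Set.range (orbitOf a)) ∪ ((Sum.inr '' ·) '' Set.range (orbitOf b)) := by
    rintro O ⟨x | x, rfl⟩
    · exact Or.inl ⟨orbitOf a x, ⟨x, rfl⟩, (orbitOf_sumCongr_inl a b x).symm⟩
    · exact Or.inr ⟨orbitOf b x, ⟨x, rfl⟩, (orbitOf_sumCongr_inr a b x).symm⟩
  exact Set.Finite.subset ((ha.image _).union (hb.image _)) hsub

lemma mem_W_sum_left {a : Perm α} (b : Perm β) (ha : a ∈ WildSet α) :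
    a.sumCongr b ∈ WildSet (α ⊕ β) := by
  have himg : ((Sum.inl '' ·) '' {O : Set α | (∃ x, O = orbitOf a x) ∧ O.Infinite}) ⊆
      {O : Set (α ⊕ β) | (∃ x, O = orbitOf (a.sumCongr b) x) ∧ O.Infinite} := by
    rintro O ⟨O', ⟨⟨x, rfl⟩, hinf⟩, rfl⟩
    exact ⟨⟨Sum.inl x, (orbitOf_sumCongr_inl a b x).symm⟩,
      hinf.image (Set.injOn_of_injective Sum.inl_injective)⟩
  exact Set.Infinite.mono himg
    (ha.image (Set.injOn_of_injective (Set.image_injective.mpr Sum.inl_injective)))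

lemma mem_W_sum_right (a : Perm α) {b : Perm β} (hb : b ∈ WildSet β) :
    a.sumCongr b ∈ WildSet (α ⊕ β) := by
  have himg : ((Sum.inr '' ·) '' {O : Set β | (∃ x, O = orbitOf b x) ∧ O.Infinite}) ⊆
      {O : Set (α ⊕ β) | (∃ x, O = orbitOf (a.sumCongr b) x) ∧ O.Infinite} := by
    rintro O ⟨O', ⟨⟨x, rfl⟩, hinf⟩, rfl⟩
    exact ⟨⟨Sum.inr x, (orbitOf_sumCongr_inr a b x).symm⟩,
      hinf.image (Set.injOn_of_injective Sum.inr_injective)⟩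
  exact Set.Infinite.mono himg
    (hb.image (Set.injOn_of_injective (Set.image_injective.mpr Sum.inr_injective)))

lemma mem_R_inv {f : Perm α} (hf : f ∈ RingedSet α) : f⁻¹ ∈ RingedSet α := by
  have : orbitOf f⁻¹ = orbitOf f := funext fun x => orbitOf_inv f x
  show (Set.range (orbitOf f⁻¹)).Finite
  rw [this]; exact hf

lemma mem_W_inv {f : Perm α} (hf : f ∈ WildSet α) : f⁻¹ ∈ WildSet α := by
  have : orbitOf f⁻¹ = orbitOf f := funext fun x => orbitOf_inv f x
  show {O : Set α | (∃ x, O = orbitOf f⁻¹ x) ∧ O.Infinite}.Infinite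
  rw [this]; exact hf

lemma mem_R_permCongr (e : α ≃ β) {f : Perm α} (hf : f ∈ RingedSet α) :
    e.permCongr f ∈ RingedSet β := by
  have hsub : Set.range (orbitOf (e.permCongr f)) ⊆ (e '' ·) '' Set.range (orbitOf f) := by
    rintro O ⟨y, rfl⟩
    refine ⟨orbitOf f (e.symm y), ⟨e.symm y, rfl⟩, ?_⟩
    show e '' orbitOf f (e.symm y) = orbitOf (e.permCongr f) y
    rw [← orbitOf_permCongr e f (e.symm y), Equiv.apply_symm_apply]
  exact Set.Finite.subset (hf.image _) hsub

lemma mem_W_permCongr (e : α ≃ β) {f : Perm α} (hf : f ∈ WildSet α) :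
    e.permCongr f ∈ WildSet β := by
  have himg : ((e '' ·) '' {O : Set α | (∃ x, O = orbitOf f x) ∧ O.Infinite}) ⊆
      {O : Set β | (∃ x, O = orbitOf (e.permCongr f) x) ∧ O.Infinite} := by
    rintro O ⟨O', ⟨⟨x, rfl⟩, hinf⟩, rfl⟩
    exact ⟨⟨e x, (orbitOf_permCongr e f x).symm⟩,
      hinf.image (Set.injOn_of_injective e.injective)⟩
  exact Set.Infinite.mono himg
    (hf.image (Set.injOn_of_injective (Set.image_injective.mpr e.injective)))

/-- `prodCongr · (refl M)` as a monoid hom. -/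
def prodLeftHom (α M : Type*) : Perm α →* Perm (α × M) where
  toFun a := a.prodCongr (Equiv.refl M)
  map_one' := by ext ⟨x, m⟩ <;> rfl
  map_mul' a b := by ext ⟨x, m⟩ <;> rfl

lemma prodLeftHom_apply (a : Perm α) : prodLeftHom α M a = a.prodCongr (Equiv.refl M) := rfl

lemma orbitOf_prodLeft (a : Perm α) (x : α) (m : M) :
    orbitOf (a.prodCongr (Equiv.refl M)) (x, m) = (fun i => (i, m)) '' orbitOf a x := by
  have hz : ∀ k : ℤ, (a.prodCongr (Equiv.refl M)) ^ k = (a ^ k).prodCongr (Equiv.refl M) := by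
    intro k
    rw [← prodLeftHom_apply, ← map_zpow, prodLeftHom_apply]
  ext w
  constructor
  · rintro ⟨k, rfl⟩
    refine ⟨(a ^ k) x, ⟨k, rfl⟩, ?_⟩
    show ((a ^ k) x, m) = ((a.prodCongr (Equiv.refl M)) ^ k) (x, m)
    rw [hz]; rfl
  · rintro ⟨v, ⟨k, rfl⟩, rfl⟩
    refine ⟨k, ?_⟩
    show ((a.prodCongr (Equiv.refl M)) ^ k) (x, m) = ((a ^ k) x, m)
    rw [hz]; rfl

lemma prodLeft_mem_R [Finite M] {a : Perm α} (ha : a ∈ RingedSet α) :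
    a.prodCongr (Equiv.refl M) ∈ RingedSet (α × M) := by
  have hsub : Set.range (orbitOf (a.prodCongr (Equiv.refl M))) ⊆
      Set.image2 (fun O m => (fun i => (i, m)) '' O) (Set.range (orbitOf a)) Set.univ := by
    rintro O ⟨⟨x, m⟩, rfl⟩
    exact ⟨orbitOf a x, ⟨x, rfl⟩, m, Set.mem_univ m, (orbitOf_prodLeft a x m).symm⟩
  exact Set.Finite.subset (Set.Finite.image2 _ ha Set.finite_univ) hsub

lemma prodLeft_mem_W [Infinite M] {a : Perm α} (x0 : α) (hx : (orbitOf a x0).Infinite) :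
    a.prodCongr (Equiv.refl M) ∈ WildSet (α × M) := by
  apply Set.infinite_of_injective_forall_mem
    (f := fun m : M => (fun i => (i, m)) '' orbitOf a x0)
  · intro m m' h
    simp only at h
    have hm : (x0, m) ∈ (fun i => (i, m)) '' orbitOf a x0 :=
      ⟨x0, mem_orbitOf_self a x0, rfl⟩
    rw [h] at hm
    obtain ⟨i, _, hi⟩ := hm
    exact (congrArg Prod.snd hi).symm
  · intro m
    exact ⟨⟨(x0, m), (orbitOf_prodLeft a x0 m).symm⟩,
      hx.image (Set.injOn_of_injective (fun i j h => (Prod.mk.injEq _ _ _ _ ▸ h).1))⟩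

end Transfer

section Conj
variable {Ω : Type*}

/-- An involution with infinite support is conjugate to the model
`(pairing on ℤ) × M` extended by the identity on its fixed points. -/
lemma invol_conj [Countable Ω] (M : Type*) [Countable M] [Nonempty M]
    (t : Perm Ω) (ht : t * t = 1) (hsupp : {x : Ω | t x ≠ x}.Infinite) :
    ∃ E : ((ℤ × M) ⊕ {x : Ω // ¬ t x ≠ x}) ≃ Ω,
      t = E.permCongr ((tau.prodCongr (Equiv.refl M)).sumCongr 1) := by
  classical
  have htt : ∀ x, t (t x) = x := by
    intro x
    have h := Equiv.ext_iff.mp ht x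
    simpa [Perm.mul_apply] using h
  have hpt : ∀ x, t (t x) ≠ t x ↔ t x ≠ x := by
    intro x
    rw [htt x]
    exact ne_comm
  let tP : Perm {x : Ω // t x ≠ x} := t.subtypePerm hpt
  have htP : ∀ x : {x : Ω // t x ≠ x}, (↑(tP x) : Ω) = t ↑x := fun x => rfl
  have htPP : ∀ x, tP (tP x) = x := by
    intro x
    apply Subtype.ext
    rw [htP, htP, htt]
  haveI hPinf : Infinite {x : Ω // t x ≠ x} := Set.infinite_coe_iff.mpr hsupp
  obtain ⟨fN, hfN⟩ := Countable.exists_injective_nat Ω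
  let T : Set {x : Ω // t x ≠ x} := {x | fN ↑x < fN (t ↑x)}
  have hmem : ∀ x, (x ∈ T ↔ fN ↑x < fN (t ↑x)) := fun x => Iff.rfl
  have hdi : ∀ x, (x ∈ T ↔ tP x ∉ T) := by
    intro x
    have hne : fN ↑x ≠ fN (t ↑x) := fun h => x.2 (hfN h).symm
    have h2 : tP x ∈ T ↔ fN (t ↑x) < fN ↑x := by
      rw [hmem (tP x), htP, htt]
    rw [hmem x, h2]
    omega
  have hdi2 : ∀ x, (tP x ∈ T ↔ x ∉ T) := by
    intro x
    rw [hdi (tP x), htPP x]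
  -- T is infinite
  have hTinf : T.Infinite := by
    intro hTfin
    have hcover : (Set.univ : Set {x : Ω // t x ≠ x}) ⊆ T ∪ (tP '' T) := by
      intro x _
      by_cases hx : x ∈ T
      · exact Or.inl hx
      · exact Or.inr ⟨tP x, (hdi2 x).mpr hx, htPP x⟩
    exact Set.infinite_univ (Set.Finite.subset (hTfin.union (hTfin.image _)) hcover)
  -- an enumeration of T by ℤ × M
  haveI : Infinite ↥T := Set.infinite_coe_iff.mpr hTinf
  obtain ⟨dT⟩ := nonempty_denumerable ↥T
  obtain ⟨dZM⟩ := nonempty_denumerable (ℤ × M)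
  let q : (ℤ × M) ≃ ↥T := (Denumerable.eqv (ℤ × M)).trans (Denumerable.eqv ↥T).symm
  -- the map φ
  let φ : ℤ × M → {x : Ω // t x ≠ x} := fun u =>
    if Even u.1 then ↑(q (u.1 / 2, u.2)) else tP ↑(q ((u.1 - 3) / 2, u.2))
  have hφ_even : ∀ (n : ℤ) (m : M), Even n → φ (n, m) = ↑(q (n / 2, m)) := by
    intro n m hn
    simp only [φ, if_pos hn]
  have hφ_odd : ∀ (n : ℤ) (m : M), ¬ Even n → φ (n, m) = tP ↑(q ((n - 3) / 2, m)) := by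
    intro n m hn
    simp only [φ, if_neg hn]
  -- φ is bijective
  have hinj : Function.Injective φ := by
    rintro ⟨n, m⟩ ⟨n', m'⟩ h
    by_cases hn : Even n <;> by_cases hn' : Even n'
    · rw [hφ_even n m hn, hφ_even n' m' hn'] at h
      have h2 : q (n / 2, m) = q (n' / 2, m') := Subtype.coe_injective h
      have h3 : (n / 2, m) = (n' / 2, m') := q.injective h2
      have h4 : n / 2 = n' / 2 := congrArg Prod.fst h3
      have h5 : m = m' := congrArg Prod.snd h3
      have he : n % 2 = 0 := Int.even_iff.mp hn
      have he' : n' % 2 = 0 := Int.even_iff.mp hn'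
      have : n = n' := by omega
      rw [this, h5]
    · rw [hφ_even n m hn, hφ_odd n' m' hn'] at h
      exfalso
      have hq1 : (↑(q (n / 2, m)) : {x : Ω // t x ≠ x}) ∈ T := (q (n / 2, m)).2
      have hq2 : (↑(q ((n' - 3) / 2, m')) : {x : Ω // t x ≠ x}) ∈ T := (q ((n' - 3) / 2, m')).2
      rw [h] at hq1
      exact (hdi2 _).mp hq1 hq2
    · rw [hφ_odd n m hn, hφ_even n' m' hn'] at h
      exfalso
      have hq1 : (↑(q ((n - 3) / 2, m)) : {x : Ω // t x ≠ x}) ∈ T := (q ((n - 3) / 2, m)).2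
      have hq2 : (↑(q (n' / 2, m')) : {x : Ω // t x ≠ x}) ∈ T := (q (n' / 2, m')).2
      rw [← h] at hq2
      exact (hdi2 _).mp hq2 hq1
    · rw [hφ_odd n m hn, hφ_odd n' m' hn'] at h
      have h2 : q ((n - 3) / 2, m) = q ((n' - 3) / 2, m') :=
        Subtype.coe_injective (tP.injective h)
      have h3 : ((n - 3) / 2, m) = ((n' - 3) / 2, m') := q.injective h2
      have h4 : (n - 3) / 2 = (n' - 3) / 2 := congrArg Prod.fst h3
      have h5 : m = m' := congrArg Prod.snd h3
      have he : ¬ (n % 2 = 0) := fun hc => hn (Int.even_iff.mpr hc)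
      have he' : ¬ (n' % 2 = 0) := fun hc => hn' (Int.even_iff.mpr hc)
      have : n = n' := by omega
      rw [this, h5]
  have hsurj : Function.Surjective φ := by
    intro x
    by_cases hx : x ∈ T
    · refine ⟨(2 * (q.symm ⟨x, hx⟩).1, (q.symm ⟨x, hx⟩).2), ?_⟩
      rw [hφ_even _ _ ⟨(q.symm ⟨x, hx⟩).1, two_mul _⟩]
      have h4 : 2 * (q.symm ⟨x, hx⟩).1 / 2 = (q.symm ⟨x, hx⟩).1 := by omega
      rw [h4]
      show ((q ((q.symm ⟨x, hx⟩).1, (q.symm ⟨x, hx⟩).2)) : {x : Ω // t x ≠ x}) = x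
      rw [Prod.mk.eta, q.apply_symm_apply]
    · have hx2 : tP x ∈ T := (hdi2 x).mpr hx
      refine ⟨(2 * (q.symm ⟨tP x, hx2⟩).1 + 3, (q.symm ⟨tP x, hx2⟩).2), ?_⟩
      have hodd : ¬ Even (2 * (q.symm ⟨tP x, hx2⟩).1 + 3) := by
        intro hc
        have := Int.even_iff.mp hc
        omega
      rw [hφ_odd _ _ hodd]
      have h4 : (2 * (q.symm ⟨tP x, hx2⟩).1 + 3 - 3) / 2 = (q.symm ⟨tP x, hx2⟩).1 := by omega
      rw [h4]
      have h5 : ((q ((q.symm ⟨tP x, hx2⟩).1, (q.symm ⟨tP x, hx2⟩).2)) : {x : Ω // t x ≠ x})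
          = tP x := by
        rw [Prod.mk.eta, q.apply_symm_apply]
      rw [h5, htPP]
  let φE : (ℤ × M) ≃ {x : Ω // t x ≠ x} := Equiv.ofBijective φ ⟨hinj, hsurj⟩
  let E : ((ℤ × M) ⊕ {x : Ω // ¬ t x ≠ x}) ≃ Ω :=
    (Equiv.sumCongr φE (Equiv.refl _)).trans (Equiv.sumCompl (fun x => t x ≠ x))
  refine ⟨E, ?_⟩
  -- equivariance
  have hcomm : ∀ u : ℤ × M, t ↑(φ u) = ↑(φ ((tau.prodCongr (Equiv.refl M)) u)) := by
    rintro ⟨n, m⟩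
    have hpc : (tau.prodCongr (Equiv.refl M)) (n, m) = (tau n, m) := rfl
    by_cases hn : Even n
    · have h1 : tau n = n + 3 := by rw [tau_apply, if_pos hn]
      have h2 : ¬ Even (n + 3) := by
        rcases hn with ⟨c, rfl⟩
        intro hc
        have := Int.even_iff.mp hc
        omega
      rw [hpc, h1, hφ_even n m hn, hφ_odd _ _ h2]
      have h3 : (n + 3 - 3) / 2 = n / 2 := by omega
      rw [h3, ← htP]
    · have h1 : tau n = n - 3 := by rw [tau_apply, if_neg hn]
      have h2 : Even (n - 3) := by
        rcases Int.even_or_odd n with he | ⟨c, hc⟩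
        · exact absurd he hn
        · exact ⟨c - 1, by omega⟩
      rw [hpc, h1, hφ_odd n m hn, hφ_even _ _ h2, htP]
      exact htt _
  -- conclude
  ext x
  rw [Equiv.permCongr_apply]
  by_cases hx : t x ≠ x
  · have hEsymm : E.symm x = Sum.inl (φE.symm ⟨x, hx⟩) := by
      show (Equiv.sumCongr φE (Equiv.refl _)).symm ((Equiv.sumCompl (fun x => t x ≠ x)).symm x)
        = Sum.inl (φE.symm ⟨x, hx⟩)
      rw [Equiv.sumCompl_symm_apply_of_pos (p := fun y => t y ≠ y) hx]
      rfl
    rw [hEsymm]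
    have happ : ((tau.prodCongr (Equiv.refl M)).sumCongr (1 : Perm {x : Ω // ¬ t x ≠ x}))
        (Sum.inl (φE.symm ⟨x, hx⟩))
        = Sum.inl ((tau.prodCongr (Equiv.refl M)) (φE.symm ⟨x, hx⟩)) := rfl
    rw [happ]
    show t x = E (Sum.inl ((tau.prodCongr (Equiv.refl M)) (φE.symm ⟨x, hx⟩)))
    have hE : ∀ u : ℤ × M, E (Sum.inl u) = ↑(φ u) := fun u => rfl
    rw [hE]
    rw [← hcomm (φE.symm ⟨x, hx⟩)]
    have : (↑(φ (φE.symm ⟨x, hx⟩)) : Ω) = x := by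
      have := φE.apply_symm_apply ⟨x, hx⟩
      have h2 : φ (φE.symm ⟨x, hx⟩) = ⟨x, hx⟩ := this
      rw [h2]
    rw [this]
  · have hEsymm : E.symm x = Sum.inr (⟨x, hx⟩ : {x : Ω // ¬ t x ≠ x}) := by
      show (Equiv.sumCongr φE (Equiv.refl _)).symm ((Equiv.sumCompl (fun x => t x ≠ x)).symm x)
        = Sum.inr (⟨x, hx⟩ : {x : Ω // ¬ t x ≠ x})
      rw [Equiv.sumCompl_symm_apply_of_neg (p := fun y => t y ≠ y) hx]
      rfl
    rw [hEsymm]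
    have happ : ((tau.prodCongr (Equiv.refl M)).sumCongr (1 : Perm {x : Ω // ¬ t x ≠ x}))
        (Sum.inr (⟨x, hx⟩ : {x : Ω // ¬ t x ≠ x}))
        = Sum.inr (⟨x, hx⟩ : {x : Ω // ¬ t x ≠ x}) := rfl
    rw [happ]
    show t x = E (Sum.inr ⟨x, hx⟩)
    have hE : E (Sum.inr ⟨x, hx⟩) = x := rfl
    rw [hE]
    exact not_not.mp hx

end Conj


section Glue
variable {Ω : Type*}

lemma sumCongr_mul' {α β : Type*} (a c : Perm α) (b d : Perm β) :
    (a.sumCongr b) * (c.sumCongr d) = (a * c).sumCongr (b * d) := by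
  have h1 : ∀ (x : Perm α) (y : Perm β),
      x.sumCongr y = Equiv.Perm.sumCongrHom α β (x, y) := fun _ _ => rfl
  rw [h1, h1, h1, ← map_mul]
  rfl

lemma prodLeft_mul {M : Type*} (a b : Perm ℤ) :
    (a.prodCongr (Equiv.refl M)) * (b.prodCongr (Equiv.refl M))
      = (a * b).prodCongr (Equiv.refl M) := by
  rw [← prodLeftHom_apply, ← prodLeftHom_apply, ← prodLeftHom_apply, ← map_mul]

lemma prodLeft_tau_fact (M : Type*) :
    (sigma.prodCongr (Equiv.refl M)) * (zS⁻¹.prodCongr (Equiv.refl M))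
      = tau.prodCongr (Equiv.refl M) := by
  rw [prodLeft_mul, ← tau_eq_sigma_mul]

lemma exists_R_pair (γ : Type*) [Countable γ] :
    ∃ w : Equiv.Perm γ, w ∈ RingedSet γ ∧ w⁻¹ ∈ RingedSet γ := by
  rcases finite_or_infinite γ with hf | hi
  · exact ⟨1, mem_R_of_finite 1, mem_R_of_finite _⟩
  · obtain ⟨d⟩ := nonempty_denumerable γ
    let e : ℤ ≃ γ := (Denumerable.eqv ℤ).trans (Denumerable.eqv γ).symm
    exact ⟨e.permCongr zS, mem_R_permCongr e zS_mem_R,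
      mem_R_inv (mem_R_permCongr e zS_mem_R)⟩

lemma exists_W_pair (γ : Type*) [Countable γ] [Infinite γ] :
    ∃ w : Equiv.Perm γ, w ∈ WildSet γ ∧ w⁻¹ ∈ WildSet γ := by
  obtain ⟨d⟩ := nonempty_denumerable γ
  obtain ⟨d2⟩ := nonempty_denumerable (ℤ × ℕ)
  let e : (ℤ × ℕ) ≃ γ := (Denumerable.eqv (ℤ × ℕ)).trans (Denumerable.eqv γ).symm
  have hz : zS.prodCongr (Equiv.refl ℕ) ∈ WildSet (ℤ × ℕ) :=
    prodLeft_mem_W 0 (by rw [orbitOf_zS]; exact Set.infinite_univ)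
  exact ⟨e.permCongr (zS.prodCongr (Equiv.refl ℕ)), mem_W_permCongr e hz,
    mem_W_inv (mem_W_permCongr e hz)⟩

lemma invol_hpt (t : Perm Ω) (ht : t * t = 1) : ∀ x, t (t x) ≠ t x ↔ t x ≠ x := by
  intro x
  have htt : t (t x) = x := by
    have h := Equiv.ext_iff.mp ht x
    simpa [Perm.mul_apply] using h
  rw [htt]
  exact ne_comm

lemma invol_eq_sumCompl (t : Perm Ω) (ht : t * t = 1)
    [DecidablePred fun x : Ω => t x ≠ x] :
    t = (Equiv.sumCompl (fun x => t x ≠ x)).permCongr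
      ((t.subtypePerm (invol_hpt t ht)).sumCongr (1 : Perm {x : Ω // ¬ t x ≠ x})) := by
  ext x
  rw [Equiv.permCongr_apply]
  by_cases hx : t x ≠ x
  · rw [Equiv.sumCompl_symm_apply_of_pos (p := fun y => t y ≠ y) hx]
    rfl
  · rw [Equiv.sumCompl_symm_apply_of_neg (p := fun y => t y ≠ y) hx]
    exact not_not.mp hx

lemma mem_closure_factors {S : Set (Perm Ω)} {t u v : Perm Ω}
    (hu : u ∈ S) (hv : v ∈ S) (h : t = u * v) : t ∈ Subgroup.closure S :=
  h ▸ mul_mem (Subgroup.subset_closure hu) (Subgroup.subset_closure hv)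

lemma invol_mem_R [Countable Ω] [Infinite Ω] (t : Perm Ω) (ht : t * t = 1) :
    t ∈ Subgroup.closure (RingedSet Ω) := by
  classical
  by_cases hsupp : {x : Ω | t x ≠ x}.Infinite
  · obtain ⟨E, hE⟩ := invol_conj Unit t ht hsupp
    obtain ⟨w, hw, hw'⟩ := exists_R_pair {x : Ω // ¬ t x ≠ x}
    have hfact : (tau.prodCongr (Equiv.refl Unit)).sumCongr (1 : Perm {x : Ω // ¬ t x ≠ x})
        = ((sigma.prodCongr (Equiv.refl Unit)).sumCongr w)
          * ((zS⁻¹.prodCongr (Equiv.refl Unit)).sumCongr w⁻¹) := by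
      rw [sumCongr_mul', prodLeft_tau_fact, mul_inv_cancel]
    rw [hfact] at hE
    rw [_root_.permCongr_mul] at hE
    exact mem_closure_factors
      (mem_R_permCongr E (mem_R_sum (prodLeft_mem_R sigma_mem_R) hw))
      (mem_R_permCongr E (mem_R_sum (prodLeft_mem_R (mem_R_inv zS_mem_R)) hw')) hE
  · rw [Set.not_infinite] at hsupp
    haveI : Finite {x : Ω // t x ≠ x} := hsupp.to_subtype
    obtain ⟨w, hw, hw'⟩ := exists_R_pair {x : Ω // ¬ t x ≠ x}
    have hE := invol_eq_sumCompl t ht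
    have hfact : (t.subtypePerm (invol_hpt t ht)).sumCongr (1 : Perm {x : Ω // ¬ t x ≠ x})
        = ((t.subtypePerm (invol_hpt t ht)).sumCongr w)
          * ((1 : Perm {x : Ω // t x ≠ x}).sumCongr w⁻¹) := by
      rw [sumCongr_mul', mul_one, mul_inv_cancel]
    rw [hfact] at hE
    rw [_root_.permCongr_mul] at hE
    exact mem_closure_factors
      (mem_R_permCongr _ (mem_R_sum (mem_R_of_finite _) hw))
      (mem_R_permCongr _ (mem_R_sum (mem_R_of_finite _) hw')) hE

lemma invol_mem_W [Countable Ω] [Infinite Ω] (t : Perm Ω) (ht : t * t = 1) :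
    t ∈ Subgroup.closure (WildSet Ω) := by
  classical
  by_cases hsupp : {x : Ω | t x ≠ x}.Infinite
  · obtain ⟨E, hE⟩ := invol_conj ℕ t ht hsupp
    have hfact : (tau.prodCongr (Equiv.refl ℕ)).sumCongr (1 : Perm {x : Ω // ¬ t x ≠ x})
        = ((sigma.prodCongr (Equiv.refl ℕ)).sumCongr 1)
          * ((zS⁻¹.prodCongr (Equiv.refl ℕ)).sumCongr 1) := by
      rw [sumCongr_mul', prodLeft_tau_fact, mul_one]
    rw [hfact] at hE
    rw [_root_.permCongr_mul] at hE
    have hzinv : (orbitOf zS⁻¹ 0).Infinite := by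
      rw [orbitOf_inv, orbitOf_zS]; exact Set.infinite_univ
    exact mem_closure_factors
      (mem_W_permCongr E (mem_W_sum_left (1 : Perm {x : Ω // ¬ t x ≠ x})
        (prodLeft_mem_W 0 (sigma_orbit_infinite 0))))
      (mem_W_permCongr E (mem_W_sum_left (1 : Perm {x : Ω // ¬ t x ≠ x})
        (prodLeft_mem_W 0 hzinv))) hE
  · rw [Set.not_infinite] at hsupp
    haveI : Infinite {x : Ω // ¬ t x ≠ x} :=
      Set.infinite_coe_iff.mpr hsupp.infinite_compl
    obtain ⟨w, hw, hw'⟩ := exists_W_pair {x : Ω // ¬ t x ≠ x}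
    have hE := invol_eq_sumCompl t ht
    have hfact : (t.subtypePerm (invol_hpt t ht)).sumCongr (1 : Perm {x : Ω // ¬ t x ≠ x})
        = ((t.subtypePerm (invol_hpt t ht)).sumCongr w)
          * ((1 : Perm {x : Ω // t x ≠ x}).sumCongr w⁻¹) := by
      rw [sumCongr_mul', mul_one, mul_inv_cancel]
    rw [hfact] at hE
    rw [_root_.permCongr_mul] at hE
    exact mem_closure_factors
      (mem_W_permCongr _ (mem_W_sum_right _ hw))
      (mem_W_permCongr _ (mem_W_sum_right _ hw')) hE

end Glue

theorem LF_ringed_wild_generate {Ω : Type*} [Countable Ω] [Infinite Ω] :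
    Subgroup.closure (LFset Ω) = ⊤ ∧ Subgroup.closure (RingedSet Ω) = ⊤ ∧
    Subgroup.closure (WildSet Ω) = ⊤ := by
  have hLF : ∀ t : Perm Ω, t * t = 1 → t ∈ LFset Ω := by
    intro t ht x
    exact Set.Finite.subset (Set.Finite.insert x (Set.finite_singleton (t x)))
      (invol_orbit_subset t ht x)
  refine ⟨?_, ?_, ?_⟩
  · rw [Subgroup.eq_top_iff']
    intro g
    obtain ⟨a, b, ha, hb, rfl⟩ := exists_invol_factorization g
    exact mul_mem (Subgroup.subset_closure (hLF a ha)) (Subgroup.subset_closure (hLF b hb))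
  · rw [Subgroup.eq_top_iff']
    intro g
    obtain ⟨a, b, ha, hb, rfl⟩ := exists_invol_factorization g
    exact mul_mem (invol_mem_R a ha) (invol_mem_R b hb)
  · rw [Subgroup.eq_top_iff']
    intro g
    obtain ⟨a, b, ha, hb, rfl⟩ := exists_invol_factorization g
    exact mul_mem (invol_mem_W a ha) (invol_mem_W b hb)
end
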